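/- arXiv:2506.02985 — 8 statements merged into one kernel-verified Lean document; each statement's English description precedes it below -/
import Mathlib

section
/- The number of inversion sequences of length n that avoid both patterns 102 and 001 and have rank t equals 2^(n-t-2), for all integers n ≥ 2 and 0 ≤ t ≤ n-2. -/
/-- An inversion sequence of length `n`, 1-indexed: `0 ≤ e i ≤ i - 1` for `1 ≤ i ≤ n`,
normalized to be `0` outside `[1, n]`. -/
def IsInvSeq (n : ℕ) (e : ℕ → ℕ) : Prop :=
  e 0 = 0 ∧ (∀ i, 1 ≤ i → i ≤ n → e i < i) ∧ ∀ i, n < i → e i = 0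

/-- `e` contains a length-3 pattern described by the relation `P` on values. -/
def Contains (n : ℕ) (P : ℕ → ℕ → ℕ → Prop) (e : ℕ → ℕ) : Prop :=
  ∃ i j k, 1 ≤ i ∧ i < j ∧ j < k ∧ k ≤ n ∧ P (e i) (e j) (e k)

def Pat102 (a b c : ℕ) : Prop := b < a ∧ a < c
def Pat001 (a b c : ℕ) : Prop := a = b ∧ b < c
def Pat011 (a b c : ℕ) : Prop := a < b ∧ b = c
def Pat012 (a b c : ℕ) : Prop := a < b ∧ b < c
def Pat021 (a b c : ℕ) : Prop := a < c ∧ c < b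
def Pat110 (a b c : ℕ) : Prop := a = b ∧ c < b
def Pat120 (a b c : ℕ) : Prop := c < a ∧ a < b
def Pat201 (a b c : ℕ) : Prop := b < c ∧ c < a
def Pat210 (a b c : ℕ) : Prop := c < b ∧ b < a
def Pat101 (a b c : ℕ) : Prop := a = c ∧ b < a

/-- `p` is the position of the first descent of `e` (with convention `e (n+1) = -1`,
i.e. there is always a descent at position `n`). -/
def PrMax (n : ℕ) (e : ℕ → ℕ) (p : ℕ) : Prop :=
  1 ≤ p ∧ p ≤ n ∧ (∀ i, 1 ≤ i → i < p → e i ≤ e (i + 1)) ∧ (p = n ∨ e (p + 1) < e p)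

/-- `e` has rank `t`, i.e. `t = prmax e - max e - 1`. -/
def HasRank (n : ℕ) (e : ℕ → ℕ) (t : ℕ) : Prop :=
  ∃ p, PrMax n e p ∧ p = e p + t + 1

/-- `m` is the maximum value of `e` on `[1, n]`. -/
def IsMaxVal (n : ℕ) (e : ℕ → ℕ) (m : ℕ) : Prop :=
  (∀ i, 1 ≤ i → i ≤ n → e i ≤ m) ∧ ∃ i, 1 ≤ i ∧ i ≤ n ∧ e i = m



lemma ncard_biUnion_eq {α β : Type*} [DecidableEq β] (s : Finset β) (A : β → Set α)
    (hfin : ∀ b ∈ s, (A b).Finite)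
    (hdisj : ∀ b ∈ s, ∀ c ∈ s, b ≠ c → Disjoint (A b) (A c)) :
    (⋃ b ∈ s, A b).ncard = ∑ b ∈ s, (A b).ncard := by
  induction s using Finset.induction with
  | empty => simp
  | @insert a s ha ih =>
      rw [Finset.set_biUnion_insert, Finset.sum_insert ha]
      have hfin' : (⋃ b ∈ s, A b).Finite := Set.Finite.biUnion s.finite_toSet
        (fun b hb => hfin b (Finset.mem_insert_of_mem hb))
      rw [Set.ncard_union_eq ?_ (hfin a (Finset.mem_insert_self a s)) hfin',
        ih (fun b hb => hfin b (Finset.mem_insert_of_mem hb))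
          (fun b hb c hc hbc => hdisj b (Finset.mem_insert_of_mem hb) c (Finset.mem_insert_of_mem hc) hbc)]
      · exact Set.disjoint_iUnion₂_right.mpr (fun b hb =>
          hdisj a (Finset.mem_insert_self a s) b (Finset.mem_insert_of_mem hb)
            (fun h => ha (h ▸ hb)))


/-- weakly decreasing sequences of length `L` with values `< m`, padded with 0. -/
def Dset (m L : ℕ) : Set (ℕ → ℕ) :=
  {f | (∀ i, i + 1 < L → f (i + 1) ≤ f i) ∧ (∀ i, i < L → f i < m) ∧ ∀ i, L ≤ i → f i = 0}

lemma Dset_finite (m L : ℕ) : (Dset m L).Finite := by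
  have : Dset m L ⊆ (fun (g : Fin L → Fin m) => (fun i => if h : i < L then (g ⟨i, h⟩ : ℕ) else 0)) '' Set.univ := by
    rintro f ⟨h1, h2, h3⟩
    refine ⟨fun j => ⟨f j, h2 j j.2⟩, trivial, ?_⟩
    funext i
    by_cases h : i < L
    · simp [h]
    · simp [h, h3 i (le_of_not_gt h)]
  exact Set.Finite.subset ((Set.finite_univ).image _) this

lemma Dset_chain {m L : ℕ} {f : ℕ → ℕ} (hf : f ∈ Dset m L) :
    ∀ i, i < L → f i ≤ f 0 := by
  intro i
  induction i with
  | zero => intro _; exact le_rfl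
  | succ k ih => intro h; exact (hf.1 k h).trans (ih (Nat.lt_of_succ_lt h))

lemma sum_choose_aux (L : ℕ) : ∀ m : ℕ, ∑ v ∈ Finset.range m, (v + L).choose L = (L + m).choose (L + 1) := by
  intro m
  induction m with
  | zero => simp [Nat.choose_eq_zero_of_lt (Nat.lt_succ_self L)]
  | succ k ih =>
      rw [Finset.sum_range_succ, ih]
      have : L + (k + 1) = (L + k) + 1 := by ring
      rw [this, Nat.choose_succ_succ (L + k) L, Nat.add_comm k L, Nat.succ_eq_add_one]
      omega

lemma Dset_ncard (L : ℕ) : ∀ m : ℕ, 1 ≤ m → (Dset m L).ncard = ((m - 1) + L).choose L := by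
  induction L with
  | zero =>
      intro m hm
      have : Dset m 0 = {fun _ => 0} := by
        ext f
        constructor
        · rintro ⟨_, _, h3⟩; funext i; exact h3 i (Nat.zero_le i)
        · rintro rfl; exact ⟨fun i h => by omega, fun i h => by omega, fun i _ => rfl⟩
      simp [this]
  | succ L ih =>
      intro m hm
      -- decompose by value of f 0
      have hdecomp : Dset m (L + 1) = ⋃ v ∈ Finset.range m, {f ∈ Dset m (L+1) | f 0 = v} := by
        ext f
        simp only [Set.mem_iUnion, Finset.mem_range, Set.mem_setOf_eq, Set.mem_sep_iff]
        constructor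
        · intro hf; exact ⟨f 0, hf.2.1 0 (Nat.succ_pos L), hf, rfl⟩
        · rintro ⟨v, _, hf, _⟩; exact hf
      have hS : ∀ v, v < m → {f ∈ Dset m (L+1) | f 0 = v} =
          (fun (g : ℕ → ℕ) => (fun i => if i = 0 then v else g (i - 1))) '' Dset (v+1) L := by
        intro v hv
        ext f
        constructor
        · rintro ⟨hf, hf0⟩
          refine ⟨fun i => f (i + 1), ⟨?_, ?_, ?_⟩, ?_⟩
          · intro i hi
            show f (i + 1 + 1) ≤ f (i + 1)
            exact hf.1 (i+1) (by omega)
          · intro i hi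
            show f (i + 1) < v + 1
            have := Dset_chain hf (i + 1) (by omega)
            omega
          · intro i hi
            show f (i + 1) = 0
            exact hf.2.2 (i+1) (by omega)
          · funext i
            show (if i = 0 then v else f (i - 1 + 1)) = f i
            rcases Nat.eq_zero_or_pos i with rfl | hi
            · simp [hf0]
            · rw [if_neg (by omega : ¬ i = 0), show i - 1 + 1 = i by omega]
        · rintro ⟨g, ⟨hg1, hg2, hg3⟩, rfl⟩
          refine ⟨⟨?_, ?_, ?_⟩, if_pos rfl⟩
          · intro i hi
            show (if i + 1 = 0 then v else g (i + 1 - 1)) ≤ (if i = 0 then v else g (i - 1))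
            rw [if_neg (by omega : ¬ i + 1 = 0)]
            rcases Nat.eq_zero_or_pos i with rfl | hipos
            · rw [if_pos rfl, show (0:ℕ) + 1 - 1 = 0 from rfl]
              have := hg2 0 (by omega)
              omega
            · rw [if_neg (by omega : ¬ i = 0), show i + 1 - 1 = (i - 1) + 1 by omega]
              exact hg1 (i-1) (by omega)
          · intro i hi
            show (if i = 0 then v else g (i - 1)) < m
            rcases Nat.eq_zero_or_pos i with rfl | hipos
            · rw [if_pos rfl]; exact hv
            · rw [if_neg (by omega : ¬ i = 0)]
              have := hg2 (i - 1) (by omega); omega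
          · intro i hi
            show (if i = 0 then v else g (i - 1)) = 0
            rw [if_neg (by omega : ¬ i = 0)]
            exact hg3 (i-1) (by omega)
      have hInj : ∀ v : ℕ, Set.InjOn (fun (g : ℕ → ℕ) => (fun i => if i = 0 then v else g (i - 1)))
          (Dset (v+1) L) := by
        intro v g g' hg hg' h
        funext i
        have := congrFun h (i + 1)
        simpa using this
      rw [hdecomp, ncard_biUnion_eq]
      · have : ∀ v ∈ Finset.range m, {f ∈ Dset m (L+1) | f 0 = v}.ncard = (v + L).choose L := by
          intro v hv
          rw [hS v (Finset.mem_range.mp hv), Set.ncard_image_of_injOn (hInj v),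
            ih (v+1) (by omega)]
          congr 1
        rw [Finset.sum_congr rfl this, sum_choose_aux L m]
        congr 1
        omega
      · intro v hv
        rw [hS v (Finset.mem_range.mp hv)]
        exact ((Dset_finite _ _).image _)
      · intro b hb c hc hbc
        rw [Set.disjoint_left]
        rintro f ⟨_, hb'⟩ ⟨_, hc'⟩
        exact hbc (hb' ▸ hc')








def ExtSeq (n t m : ℕ) (f : ℕ → ℕ) : ℕ → ℕ :=
  fun i => if i ≤ m + t + 1 then min (i - 1) m else if i ≤ n then f (i - (m + t + 2)) else 0

lemma Dset_chain' {m L : ℕ} {f : ℕ → ℕ} (hf : f ∈ Dset m L) :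
    ∀ a b, b ≤ a → a < L → f a ≤ f b := by
  intro a
  induction a with
  | zero =>
      intro b hb _
      cases Nat.le_zero.mp hb
      exact le_rfl
  | succ k ih =>
      intro b hb ha
      rcases Nat.eq_or_lt_of_le hb with rfl | hb'
      · exact le_rfl
      · exact le_trans (hf.1 k ha) (ih b (by omega) (by omega))

lemma ext_facts {n t m : ℕ} (hmn : m + t + 1 ≤ n) {f : ℕ → ℕ} (hf : f ∈ Dset m (n - (m + t + 1))) :
    (∀ k, k ≤ m + t + 1 → ExtSeq n t m f k = min (k - 1) m) ∧
    (∀ k, m + t + 1 < k → k ≤ n → ExtSeq n t m f k = f (k - (m + t + 2)) ∧ ExtSeq n t m f k < m) ∧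
    (∀ k, n < k → ExtSeq n t m f k = 0) := by
  refine ⟨fun k hk => if_pos hk, fun k hk1 hk2 => ?_, fun k hk => ?_⟩
  · have h1 : ExtSeq n t m f k = f (k - (m + t + 2)) := by
      unfold ExtSeq; rw [if_neg (by omega), if_pos hk2]
    refine ⟨h1, ?_⟩
    rw [h1]
    exact hf.2.1 _ (by omega)
  · unfold ExtSeq; rw [if_neg (by omega), if_neg (by omega)]

lemma ext_tail_anti {n t m : ℕ} (hmn : m + t + 1 ≤ n) {f : ℕ → ℕ} (hf : f ∈ Dset m (n - (m + t + 1))) :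
    ∀ j k, m + t + 1 < j → j ≤ k → k ≤ n → ExtSeq n t m f k ≤ ExtSeq n t m f j := by
  intro j k hj hjk hkn
  obtain ⟨h1, h2, h3⟩ := ext_facts hmn hf
  rw [(h2 k (by omega) hkn).1, (h2 j hj (by omega)).1]
  exact Dset_chain' hf _ _ (by omega) (by omega)

lemma ext_mem_SET {n t m : ℕ} (hm : 1 ≤ m) (hmn : m + t + 1 ≤ n) {f : ℕ → ℕ} (hf : f ∈ Dset m (n - (m + t + 1))) :
    IsInvSeq n (ExtSeq n t m f) ∧ ¬ Contains n Pat102 (ExtSeq n t m f) ∧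
      ¬ Contains n Pat001 (ExtSeq n t m f) ∧ HasRank n (ExtSeq n t m f) t := by
  obtain ⟨hpre, htail, hbig⟩ := ext_facts hmn hf
  set e := ExtSeq n t m f with he
  set p := m + t + 1 with hp
  -- global bound
  have hub : ∀ k, 1 ≤ k → k ≤ n → e k ≤ m := by
    intro k h1 h2
    by_cases hk : k ≤ p
    · rw [hpre k hk]; exact min_le_right _ _
    · exact le_of_lt (htail k (by omega) h2).2
  have hanti : ∀ j k, m + t + 1 < j → j ≤ k → k ≤ n → e k ≤ e j := ext_tail_anti hmn hf
  refine ⟨⟨?_, ?_, ?_⟩, ?_, ?_, ?_⟩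
  · rw [hpre 0 (by omega)]; simp
  · intro i h1 h2
    by_cases hk : i ≤ p
    · rw [hpre i hk]; omega
    · have := (htail i (by omega) h2).2; omega
  · exact hbig
  · rintro ⟨i, j, k, hi, hij, hjk, hkn, hab, hbc⟩
    by_cases hjp : j ≤ p
    · have h1 : e i = min (i - 1) m := hpre i (by omega)
      have h2 : e j = min (j - 1) m := hpre j hjp
      have : e i ≤ e j := by rw [h1, h2]; exact min_le_min (by omega) le_rfl
      omega
    · have := hanti j k (by omega) (by omega) hkn
      omega
  · rintro ⟨i, j, k, hi, hij, hjk, hkn, hab, hbc⟩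
    by_cases hjp : j ≤ p
    · have h1 : e i = min (i - 1) m := hpre i (by omega)
      have h2 : e j = min (j - 1) m := hpre j hjp
      have hkb : e k ≤ m := hub k (by omega) hkn
      -- e i = e j with i < j forces both = m
      have : e i = m ∧ e j = m := by
        rw [h1, h2] at hab ⊢
        omega
      omega
    · have := hanti j k (by omega) (by omega) hkn
      omega
  · refine ⟨p, ⟨by omega, by omega, ?_, ?_⟩, ?_⟩
    · intro i h1 h2
      rw [hpre i (by omega), hpre (i+1) (by omega)]
      exact min_le_min (by omega) le_rfl
    · by_cases hpn : p = n
      · exact Or.inl hpn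
      · refine Or.inr ?_
        have h1 := (htail (p+1) (by omega) (by omega)).2
        have h2 : e p = m := by
          rw [hpre p le_rfl]; exact min_eq_right (by omega)
        omega
    · have h2 : e p = m := by rw [hpre p le_rfl]; omega
      omega


lemma mono_chain {n p : ℕ} {e : ℕ → ℕ} (h : ∀ i, 1 ≤ i → i < p → e i ≤ e (i + 1)) :
    ∀ a b, 1 ≤ a → a ≤ b → b ≤ p → e a ≤ e b := by
  intro a b h1 h2 h3
  induction b with
  | zero => omega
  | succ k ih =>
      rcases Nat.eq_or_lt_of_le h2 with rfl | hlt
      · exact le_rfl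
      · exact le_trans (ih (by omega) (by omega)) (h k (by omega) (by omega))

lemma set_mem_ext {n t : ℕ} {e : ℕ → ℕ} (hn : 2 ≤ n) (ht : t ≤ n - 2)
    (hinv : IsInvSeq n e) (h102 : ¬ Contains n Pat102 e) (h001 : ¬ Contains n Pat001 e)
    (hrank : HasRank n e t) :
    ∃ m, 1 ≤ m ∧ m + t + 1 ≤ n ∧
      (fun i => e (m + t + 2 + i)) ∈ Dset m (n - (m + t + 1)) ∧
      e = ExtSeq n t m (fun i => e (m + t + 2 + i)) := by
  obtain ⟨he0, hbnd, hout⟩ := hinv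
  obtain ⟨p, ⟨hp1, hpn, hmono, hdesc⟩, hr⟩ := hrank
  obtain ⟨m, hmdef⟩ : ∃ m, e p = m := ⟨e p, rfl⟩
  have hchain := mono_chain (n := n) (p := p) hmono
  have he1 : e 1 = 0 := by have := hbnd 1 (by omega) (by omega); omega
  -- m ≥ 1
  have hm : 1 ≤ m := by
    by_contra h
    have hm0 : m = 0 := by omega
    have hpn' : p < n := by omega
    rcases hdesc with h' | h'
    · omega
    · omega
  have hpval : p = m + t + 1 := by omega
  -- descent exists when p < n
  have hdesc' : p < n → e (p + 1) < m := by
    intro h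
    rcases hdesc with h' | h'
    · omega
    · omega
  -- upper bound
  have hub : ∀ k, 1 ≤ k → k ≤ n → e k ≤ m := by
    intro k h1 h2
    by_cases hk : k ≤ p
    · have := hchain k p h1 hk le_rfl
      omega
    · by_contra hgt
      have hd := hdesc' (by omega)
      rcases Nat.eq_or_lt_of_le (by omega : p + 1 ≤ k) with h' | h'
      · rw [h'] at hd; omega
      · exact h102 ⟨p, p + 1, k, hp1, by omega, h', h2, by omega, by omega⟩
  -- prefix values
  have hpre : ∀ i, 1 ≤ i → i ≤ p → e i = min (i - 1) m := by
    intro i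
    induction i with
    | zero => omega
    | succ j ih =>
        intro h1 h2
        rcases Nat.eq_zero_or_pos j with rfl | hj
        · exact he1.trans (Nat.zero_min m).symm
        · have hej : e j = min (j - 1) m := ih (by omega) (by omega)
          have hle : e j ≤ e (j + 1) := hmono j (by omega) (by omega)
          have hub' : e (j + 1) ≤ m := hub (j + 1) (by omega) (by omega)
          by_cases hcase : m ≤ j - 1
          · have : e j = m := by omega
            have : e (j + 1) = m := by omega
            omega
          · -- e j = j - 1 < m
            have hejv : e j = j - 1 := by omega
            have hne : e j ≠ e (j + 1) := by
              intro heq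
              have hjp : j + 1 < p := by
                rcases Nat.eq_or_lt_of_le h2 with h' | h'
                · exfalso
                  have : e (j + 1) = m := by rw [h']; exact hmdef
                  omega
                · omega
              exact h001 ⟨j, j + 1, p, by omega, by omega, hjp, hpn,
                heq, by omega⟩
            have hbj : e (j + 1) < j + 1 := hbnd (j + 1) (by omega) (by omega)
            omega
  have hepm : e p = m := hmdef
  -- tail strict bound
  have htb : ∀ k, p < k → k ≤ n → e k < m := by
    intro k hk1 hk2
    have hkb := hub k (by omega) hk2
    by_contra hge
    have hekm : e k = m := by omega
    have hd := hdesc' (by omega)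
    have hkp1 : p + 1 < k := by
      rcases Nat.eq_or_lt_of_le (by omega : p + 1 ≤ k) with h' | h'
      · exfalso; rw [← h'] at hekm; omega
      · exact h'
    obtain ⟨v, hv⟩ : ∃ v, e (p + 1) = v := ⟨e (p + 1), rfl⟩
    by_cases hc : v + 1 < m
    · -- use position v + 2 in prefix
      have hiv : e (v + 2) = v + 1 := by
        rw [hpre (v + 2) (by omega) (by omega),
          show v + 2 - 1 = v + 1 from rfl]
        exact min_eq_left (by omega)
      exact h102 ⟨v + 2, p + 1, k, by omega, by omega, hkp1, hk2,
        by omega, by omega⟩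
    · -- v + 1 = m, use position m with value m - 1 = v
      have hvm : v + 1 = m := by omega
      have him : e m = v := by
        rw [hpre m (by omega) (by omega), min_eq_left (by omega : m - 1 ≤ m)]
        omega
      exact h001 ⟨m, p + 1, k, by omega, by omega, hkp1, hk2,
        by omega, by omega⟩
  -- tail decreasing
  have htd : ∀ j, p < j → j + 1 ≤ n → e (j + 1) ≤ e j := by
    intro j hj1 hj2
    by_contra hlt
    obtain ⟨v, hvdef⟩ : ∃ v, e j = v := ⟨e j, rfl⟩
    have hvm : v < m := by
      have := htb j hj1 (by omega); omega
    have hi1 : e (v + 1) = v := by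
      rw [hpre (v + 1) (by omega) (by omega),
        show v + 1 - 1 = v from rfl]
      exact min_eq_left (by omega)
    exact h001 ⟨v + 1, j, j + 1, by omega, by omega, by omega, hj2,
      by omega, by omega⟩
  refine ⟨m, hm, by omega, ⟨?_, ?_, ?_⟩, ?_⟩
  · intro i hi
    show e (m + t + 2 + (i + 1)) ≤ e (m + t + 2 + i)
    rw [show m + t + 2 + (i + 1) = (m + t + 2 + i) + 1 by omega]
    exact htd (m + t + 2 + i) (by omega) (by omega)
  · intro i hi
    exact htb (m + t + 2 + i) (by omega) (by omega)
  · intro i hi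
    exact hout (m + t + 2 + i) (by omega)
  · funext i
    unfold ExtSeq
    by_cases h1 : i ≤ m + t + 1
    · rw [if_pos h1]
      rcases Nat.eq_zero_or_pos i with rfl | hi
      · rw [he0]; omega
      · exact hpre i hi (by omega)
    · rw [if_neg h1]
      by_cases h2 : i ≤ n
      · rw [if_pos h2]
        congr 1
        omega
      · rw [if_neg h2]
        exact hout i (by omega)

lemma ext_injOn {n t m : ℕ} (hmn : m + t + 1 ≤ n) :
    Set.InjOn (ExtSeq n t m) (Dset m (n - (m + t + 1))) := by
  intro f hf g hg h
  funext i
  by_cases hi : i < n - (m + t + 1)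
  · have h1 := (ext_facts hmn hf).2.1 (m + t + 2 + i) (by omega) (by omega)
    have h2 := (ext_facts hmn hg).2.1 (m + t + 2 + i) (by omega) (by omega)
    have := congrFun h (m + t + 2 + i)
    rw [h1.1, h2.1] at this
    simpa [Nat.add_sub_cancel_left] using this
  · rw [hf.2.2 i (by omega), hg.2.2 i (by omega)]

lemma ext_images_ne {n t b c : ℕ} (hbn : b + t + 1 ≤ n) (hcn : c + t + 1 ≤ n)
    (hlt : b < c) {f g : ℕ → ℕ} (hf : f ∈ Dset b (n - (b + t + 1)))
    (hg : g ∈ Dset c (n - (c + t + 1))) : ExtSeq n t b f ≠ ExtSeq n t c g := by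
  intro hge
  have h2 := (ext_facts hcn hg).1
  have hv2 : ExtSeq n t c g (c + 1) = c := by
    rw [h2 (c + 1) (by omega), show c + 1 - 1 = c from rfl, min_self]
  have heq := congrFun hge (c + 1)
  by_cases hcb : c + 1 ≤ b + t + 1
  · have hv1 : ExtSeq n t b f (c + 1) = min c b := by
      rw [(ext_facts hbn hf).1 (c + 1) hcb, show c + 1 - 1 = c from rfl]
    rw [hv1, hv2] at heq
    have := min_le_right c b
    omega
  · have hv1 := ((ext_facts hbn hf).2.1 (c + 1) (by omega) (by omega)).2
    rw [heq, hv2] at hv1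
    omega

theorem stmt0 (n t : ℕ) (hn : 2 ≤ n) (ht : t ≤ n - 2) :
    {e : ℕ → ℕ | IsInvSeq n e ∧ ¬ Contains n Pat102 e ∧ ¬ Contains n Pat001 e ∧
      HasRank n e t}.ncard = 2 ^ (n - t - 2) := by
  have hM : 1 ≤ n - t - 1 := by omega
  have hset : {e : ℕ → ℕ | IsInvSeq n e ∧ ¬ Contains n Pat102 e ∧ ¬ Contains n Pat001 e ∧
      HasRank n e t} =
      ⋃ m ∈ Finset.Icc 1 (n - t - 1), ExtSeq n t m '' Dset m (n - (m + t + 1)) := by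
    ext e
    simp only [Set.mem_setOf_eq, Set.mem_iUnion, Finset.mem_Icc, exists_prop]
    constructor
    · rintro ⟨hinv, h102, h001, hrank⟩
      obtain ⟨m, hm, hmn, hfD, hfe⟩ := set_mem_ext hn ht hinv h102 h001 hrank
      exact ⟨m, ⟨hm, by omega⟩, ⟨_, hfD, hfe.symm⟩⟩
    · rintro ⟨m, ⟨hm1, hm2⟩, f, hf, rfl⟩
      exact ext_mem_SET hm1 (by omega) hf
  rw [hset, ncard_biUnion_eq]
  · have hterm : ∀ m ∈ Finset.Icc 1 (n - t - 1),
        (ExtSeq n t m '' Dset m (n - (m + t + 1))).ncard =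
          (n - t - 2).choose (n - t - 1 - m) := by
      intro m hm
      rw [Finset.mem_Icc] at hm
      rw [Set.ncard_image_of_injOn (ext_injOn (by omega)),
        Dset_ncard _ _ hm.1]
      congr 1 <;> omega
    rw [Finset.sum_congr rfl hterm]
    have hre : ∑ m ∈ Finset.Icc 1 (n - t - 1), (n - t - 2).choose (n - t - 1 - m) =
        ∑ j ∈ Finset.range (n - t - 1), (n - t - 2).choose j := by
      refine Finset.sum_nbij' (fun m => n - t - 1 - m) (fun j => n - t - 1 - j)
        ?_ ?_ ?_ ?_ ?_
      · intro a ha; simp only [Finset.mem_Icc] at ha; simp only [Finset.mem_range]; omega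
      · intro a ha; simp only [Finset.mem_range] at ha; simp only [Finset.mem_Icc]
        constructor <;> omega
      · intro a ha; simp only [Finset.mem_Icc] at ha
        show n - t - 1 - (n - t - 1 - a) = a; omega
      · intro a ha; simp only [Finset.mem_range] at ha
        show n - t - 1 - (n - t - 1 - a) = a; omega
      · intro a ha; rfl
    rw [hre, show n - t - 1 = (n - t - 2) + 1 by omega, Nat.sum_range_choose]
  · intro m hm
    exact (Dset_finite _ _).image _
  · intro b hb c hc hbc
    rw [Finset.mem_Icc] at hb hc
    rw [Set.disjoint_left]
    rintro e ⟨f, hf, rfl⟩ ⟨g, hg, hge⟩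
    rcases Nat.lt_or_ge b c with hlt | hge'
    · exact ext_images_ne (by omega) (by omega) hlt hf hg hge.symm
    · exact ext_images_ne (by omega) (by omega) (by omega : c < b) hg hf hge
end

section
/- A 001-avoiding inversion sequence of length n automatically avoids 102; equivalently, e avoids both 102 and 001 if and only if there exists an index k such that e_1 < e_2 < ... < e_k ≥ e_{k+1} ≥ ... ≥ e_n. -/
/-- strict increase on [1,k] chains up. -/
lemma inc_chain {e : ℕ → ℕ} {k : ℕ}
    (h : ∀ i, 1 ≤ i → i < k → e i < e (i + 1)) :
    ∀ b a, 1 ≤ a → a < b → b ≤ k → e a < e b := by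
  intro b
  induction b with
  | zero => intro a _ h2 _; omega
  | succ b ih =>
    intro a ha hab hbk
    rcases Nat.lt_or_ge a b with hlt | hge
    · exact lt_trans (ih a ha hlt (by omega)) (h b (by omega) (by omega))
    · have : a = b := by omega
      subst this
      exact h a ha (by omega)

/-- weak decrease on [k,n] chains down. -/
lemma dec_chain {e : ℕ → ℕ} {k n : ℕ}
    (h : ∀ i, k ≤ i → i < n → e (i + 1) ≤ e i) :
    ∀ b a, k ≤ a → a ≤ b → b ≤ n → e b ≤ e a := by
  intro b
  induction b with
  | zero =>
    intro a _ h2 _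
    have : a = 0 := by omega
    simp [this]
  | succ b ih =>
    intro a ha hab hbn
    rcases Nat.lt_or_ge a (b + 1) with hlt | hge
    · exact le_trans (h b (by omega) (by omega)) (ih a ha (by omega) (by omega))
    · have : a = b + 1 := by omega
      subst this; exact le_refl _

/-- unimodal implies avoids 001 and 102 -/
lemma unimodal_avoids {n : ℕ} {e : ℕ → ℕ} {k : ℕ} (hk1 : 1 ≤ k) (hkn : k ≤ n)
    (hinc : ∀ i, 1 ≤ i → i < k → e i < e (i + 1))
    (hdec : ∀ i, k ≤ i → i < n → e (i + 1) ≤ e i) :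
    ¬ Contains n Pat102 e ∧ ¬ Contains n Pat001 e := by
  constructor
  · rintro ⟨i, j, c, hi, hij, hjc, hcn, hji, hic⟩
    rcases le_or_gt j k with hjk | hkj
    · exact absurd (inc_chain hinc j i hi hij hjk) (by omega)
    · have : e c ≤ e j := dec_chain hdec c j (by omega) (by omega) hcn
      omega
  · rintro ⟨i, j, c, hi, hij, hjc, hcn, heq, hlt⟩
    rcases le_or_gt j k with hjk | hkj
    · exact absurd (inc_chain hinc j i hi hij hjk) (by omega)
    · have : e c ≤ e j := dec_chain hdec c j (by omega) (by omega) hcn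
      omega

/-- avoiding 001 implies unimodal -/
lemma avoid001_unimodal {n : ℕ} (hn : 1 ≤ n) {e : ℕ → ℕ} (he : IsInvSeq n e)
    (h001 : ¬ Contains n Pat001 e) :
    ∃ k, 1 ≤ k ∧ k ≤ n ∧ (∀ i, 1 ≤ i → i < k → e i < e (i + 1)) ∧
      (∀ i, k ≤ i → i < n → e (i + 1) ≤ e i) := by
  obtain ⟨-, hbd, -⟩ := he
  classical
  have hex : ∃ p, 1 ≤ p ∧ (p = n ∨ e (p + 1) ≤ e p) := ⟨n, hn, Or.inl rfl⟩
  set k := Nat.find hex with hkdef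
  obtain ⟨hk1, hkprop⟩ := Nat.find_spec hex
  rw [← hkdef] at hk1 hkprop
  have hkn : k ≤ n := Nat.find_le ⟨hn, Or.inl rfl⟩
  -- strict increase before k
  have hinc : ∀ i, 1 ≤ i → i < k → e i < e (i + 1) := by
    intro i hi hik
    have := Nat.find_min hex hik
    push_neg at this
    have h2 := this hi
    omega
  -- values on [1,k] are 0,1,...,k-1
  have hval : ∀ m, 1 ≤ m → m ≤ k → e m + 1 = m := by
    intro m
    induction m with
    | zero => omega
    | succ m ih =>
      intro _ hmk
      rcases Nat.eq_or_lt_of_le (Nat.one_le_iff_ne_zero.mpr (Nat.succ_ne_zero m)) with h | h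
      · have : m = 0 := by omega
        subst this
        have h0 := hbd 1 le_rfl hn
        simp only [Nat.zero_add]
        omega
      · have hm1 : 1 ≤ m := by omega
        have h1 := ih hm1 (by omega)
        have h2 := hinc m hm1 (by omega)
        have h3 := hbd (m + 1) (by omega) (by omega)
        omega
  refine ⟨k, hk1, hkn, hinc, ?_⟩
  -- weak decrease after k, by strong induction
  intro i
  induction i using Nat.strong_induction_on with
  | _ i ih =>
    intro hki hin
    by_contra hc
    push_neg at hc
    rcases Nat.eq_or_lt_of_le hki with hk | hk
    · -- i = k : first descent says e (k+1) ≤ e k (k ≠ n since i < n)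
      rcases hkprop with h | h
      · omega
      · rw [hk] at h; omega
    · -- i > k: e i ≤ e k = k - 1, so e i repeats an earlier value, giving 001
      have hchain : e i ≤ e k := dec_chain (n := i)
        (fun m hkm hmi => ih m hmi hkm (by omega)) i k le_rfl hki le_rfl
      have hek : e k + 1 = k := hval k hk1 le_rfl
      set a := e i + 1 with ha
      have hva : e a + 1 = a := hval a (by omega) (by omega)
      exact h001 ⟨a, i, i + 1, by omega, by omega, by omega, by omega, by omega, by omega⟩
theorem stmt1 (n : ℕ) (hn : 1 ≤ n) (e : ℕ → ℕ) (he : IsInvSeq n e) :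
    (¬ Contains n Pat001 e → ¬ Contains n Pat102 e) ∧
    ((¬ Contains n Pat102 e ∧ ¬ Contains n Pat001 e) ↔
      ∃ k, 1 ≤ k ∧ k ≤ n ∧ (∀ i, 1 ≤ i → i < k → e i < e (i + 1)) ∧
        (∀ i, k ≤ i → i < n → e (i + 1) ≤ e i)) := by
  constructor
  · intro h001
    obtain ⟨k, hk1, hkn, hinc, hdec⟩ := avoid001_unimodal hn he h001
    exact (unimodal_avoids hk1 hkn hinc hdec).1
  · constructor
    · rintro ⟨-, h001⟩
      exact avoid001_unimodal hn he h001
    · rintro ⟨k, hk1, hkn, hinc, hdec⟩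
      exact unimodal_avoids hk1 hkn hinc hdec
end

section
/- For positive integers n and t with t ≤ n-1, the number of inversion sequences of length n+1 avoiding 102 and 011 with rank t equals the number of inversion sequences of length n avoiding 102 and 011 with rank t-1. -/
lemma keyA (n t : ℕ) (e : ℕ → ℕ) (ht : 1 ≤ t)
    (h : IsInvSeq (n+1) e) (h102 : ¬ Contains (n+1) Pat102 e)
    (h011 : ¬ Contains (n+1) Pat011 e)
    (p : ℕ) (hp : PrMax (n+1) e p) (hpt : p = e p + t + 1) :
    ∀ j, 2 ≤ j → j ≤ n + 1 → e j + 1 < j := by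
  intro j hj2 hjn
  by_contra hcon
  have hej : e j + 1 = j := by
    have := h.2.1 j (by omega) hjn; omega
  obtain ⟨hp1, hpn, hmono, hdesc⟩ := hp
  have he1 : e 1 = 0 := by have := h.2.1 1 le_rfl (by omega); omega
  rcases le_or_gt j p with hjp | hjp
  · -- strict increase from j to p, forcing e p too big
    have key : ∀ m, j ≤ m → m ≤ p → m ≤ e m + 1 := by
      intro m hm
      induction m with
      | zero => omega
      | succ m ih =>
        intro hmp
        rcases eq_or_lt_of_le hm with heq | hlt
        · subst heq; omega
        · have hm' : j ≤ m := by omega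
          have h1 : m ≤ e m + 1 := ih hm' (by omega)
          have h2 : e m ≤ e (m+1) := hmono m (by omega) (by omega)
          by_cases hne : e m = e (m+1)
          · exfalso
            apply h011
            refine ⟨1, m, m+1, le_rfl, by omega, by omega, by omega, ?_, hne⟩
            omega
          · omega
    have hkp := key p (by omega) le_rfl
    have hpe := h.2.1 p (by omega) hpn
    omega
  · -- j > p : descent creates a 102 pattern or direct contradiction
    have hdes : e (p+1) < e p := by
      rcases hdesc with h' | h'
      · omega
      · exact h'
    have hpe := h.2.1 p (by omega) hpn
    rcases eq_or_lt_of_le (Nat.succ_le_of_lt hjp) with heq | hlt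
    · have hj' : j = p + 1 := by omega
      subst hj'; omega
    · apply h102
      exact ⟨p, p+1, j, hp1, by omega, hlt, hjn, hdes, by omega⟩

theorem stmt2 (n t : ℕ) (hn : 1 ≤ n) (ht1 : 1 ≤ t) (ht2 : t ≤ n - 1) :
    {e : ℕ → ℕ | IsInvSeq (n + 1) e ∧ ¬ Contains (n + 1) Pat102 e ∧
      ¬ Contains (n + 1) Pat011 e ∧ HasRank (n + 1) e t}.ncard =
    {e : ℕ → ℕ | IsInvSeq n e ∧ ¬ Contains n Pat102 e ∧
      ¬ Contains n Pat011 e ∧ HasRank n e (t - 1)}.ncard := by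
  classical
  set F : (ℕ → ℕ) → (ℕ → ℕ) := fun e i => e (i + 1) with hF
  set S₁ := {e : ℕ → ℕ | IsInvSeq (n + 1) e ∧ ¬ Contains (n + 1) Pat102 e ∧
      ¬ Contains (n + 1) Pat011 e ∧ HasRank (n + 1) e t} with hS₁
  set S₂ := {e : ℕ → ℕ | IsInvSeq n e ∧ ¬ Contains n Pat102 e ∧
      ¬ Contains n Pat011 e ∧ HasRank n e (t - 1)} with hS₂
  have himg : F '' S₁ = S₂ := by
    ext f
    constructor
    · rintro ⟨e, ⟨hinv, h102, h011, p, hp, hpt⟩, rfl⟩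
      have hkey := keyA n t e ht1 hinv h102 h011 p hp hpt
      obtain ⟨hp1, hpn, hmono, hdesc⟩ := hp
      have he1 : e 1 = 0 := by have := hinv.2.1 1 le_rfl (by omega); omega
      have hp2 : 2 ≤ p := by omega
      refine ⟨?_, ?_, ?_, ?_⟩
      · refine ⟨he1, ?_, ?_⟩
        · intro i hi1 hin
          have := hkey (i+1) (by omega) (by omega)
          simpa [hF] using (by omega : e (i+1) < i)
        · intro i hi
          exact hinv.2.2 (i+1) (by omega)
      · rintro ⟨i, j, k, hi, hij, hjk, hk, hpat⟩
        exact h102 ⟨i+1, j+1, k+1, by omega, by omega, by omega, by omega, hpat⟩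
      · rintro ⟨i, j, k, hi, hij, hjk, hk, hpat⟩
        exact h011 ⟨i+1, j+1, k+1, by omega, by omega, by omega, by omega, hpat⟩
      · refine ⟨p - 1, ⟨by omega, by omega, ?_, ?_⟩, ?_⟩
        · intro i hi1 hip
          have := hmono (i+1) (by omega) (by omega)
          simpa [hF] using this
        · rcases hdesc with h' | h'
          · left; omega
          · right
            have h1 : p - 1 + 1 = p := by omega
            have h2 : p - 1 + 1 + 1 = p + 1 := by omega
            simp only [hF, h1, h2]
            exact h'
        · have h1 : p - 1 + 1 = p := by omega
          simp only [hF, h1]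
          omega
    · rintro ⟨hinv, h102, h011, p, hp, hpt⟩
      set G : ℕ → ℕ := fun i => f (i - 1) with hG
      obtain ⟨hp1, hpn, hmono, hdesc⟩ := hp
      have hf0 : f 0 = 0 := hinv.1
      refine ⟨G, ⟨?_, ?_, ?_, ?_⟩, ?_⟩
      · refine ⟨by simpa [hG] using hf0, ?_, ?_⟩
        · intro i hi1 hin
          rcases Nat.lt_or_ge i 2 with h2 | h2
          · have : i = 1 := by omega
            simp [hG, this, hf0]
          · have := hinv.2.1 (i-1) (by omega) (by omega)
            simp only [hG]
            omega
        · intro i hi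
          have := hinv.2.2 (i-1) (by omega)
          simpa [hG] using this
      · rintro ⟨i, j, k, hi, hij, hjk, hk, hpat⟩
        rcases Nat.lt_or_ge i 2 with h2 | h2
        · have hi1 : i = 1 := by omega
          have : G i = 0 := by simp [hG, hi1, hf0]
          rw [this] at hpat
          exact absurd hpat.1 (by omega)
        · refine h102 ⟨i-1, j-1, k-1, by omega, by omega, by omega, by omega, ?_⟩
          have e1 : G i = f (i-1) := rfl
          have e2 : G j = f (j-1) := rfl
          have e3 : G k = f (k-1) := rfl
          rwa [e1, e2, e3] at hpat
      · rintro ⟨i, j, k, hi, hij, hjk, hk, hpat⟩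
        rcases Nat.lt_or_ge i 2 with h2 | h2
        · have hi1 : i = 1 := by omega
          have hGi : G i = 0 := by simp [hG, hi1, hf0]
          rw [hGi] at hpat
          -- hpat : 0 < G j ∧ G j = G k, with 2 ≤ j
          have hGj : G j = f (j-1) := rfl
          have hGk : G k = f (k-1) := rfl
          rw [hGj, hGk] at hpat
          rcases Nat.lt_or_ge j 3 with h3 | h3
          · have hj2 : j = 2 := by omega
            have : f 1 = 0 := by have := hinv.2.1 1 le_rfl (by omega); omega
            rw [hj2] at hpat
            simp only [show (2:ℕ) - 1 = 1 from rfl, this] at hpat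
            exact absurd hpat.1 (by omega)
          · have hf1 : f 1 = 0 := by have := hinv.2.1 1 le_rfl (by omega); omega
            refine h011 ⟨1, j-1, k-1, le_rfl, by omega, by omega, by omega, ?_, hpat.2⟩
            rw [hf1]; exact hpat.1
        · refine h011 ⟨i-1, j-1, k-1, by omega, by omega, by omega, by omega, ?_⟩
          exact hpat
      · refine ⟨p + 1, ⟨by omega, by omega, ?_, ?_⟩, ?_⟩
        · intro i hi1 hip
          rcases Nat.lt_or_ge i 2 with h2 | h2
          · have : i = 1 := by omega
            simp [hG, this, hf0]
          · have hmm := hmono (i-1) (by omega) (by omega)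
            have h3 : i - 1 + 1 = i := by omega
            rw [h3] at hmm
            have e1 : G i = f (i-1) := rfl
            have e2 : G (i+1) = f i := by simp [hG]
            rw [e1, e2]
            exact hmm
        · rcases hdesc with h' | h'
          · left; omega
          · right
            have e1 : G (p+1+1) = f (p+1) := by simp [hG]
            have e2 : G (p+1) = f p := by simp [hG]
            rw [e1, e2]
            exact h'
        · have e2 : G (p+1) = f p := by simp [hG]
          rw [e2]
          omega
      · funext i
        simp [hF, hG]
  have hinj : Set.InjOn F S₁ := by
    intro e₁ he₁ e₂ he₂ heq
    funext i
    cases i with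
    | zero => rw [he₁.1.1, he₂.1.1]
    | succ i => exact congrFun heq i
  rw [← himg, Set.ncard_image_of_injOn hinj]
end

section
/- For integers n ≥ 2 and 0 ≤ t ≤ n-2, the number of inversion sequences of length n avoiding both 102 and 011 with rank t equals the Fibonacci number F_{2n-2t-2} (with F_0 = 0, F_1 = 1). -/
namespace S3A

/-- The set of inversion sequences of length `n` avoiding 102 and 011. -/
def Av (n : ℕ) : Set (ℕ → ℕ) :=
  {e | IsInvSeq n e ∧ ¬ Contains n Pat102 e ∧ ¬ Contains n Pat011 e}

/-- Avoiders of given rank. -/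
def Rk (n t : ℕ) : Set (ℕ → ℕ) := {e | e ∈ Av n ∧ HasRank n e t}

lemma av_e0 {n : ℕ} {e : ℕ → ℕ} (h : e ∈ Av n) : e 0 = 0 := h.1.1
lemma av_lt {n : ℕ} {e : ℕ → ℕ} (h : e ∈ Av n) : ∀ i, 1 ≤ i → i ≤ n → e i < i := h.1.2.1
lemma av_zero {n : ℕ} {e : ℕ → ℕ} (h : e ∈ Av n) : ∀ i, n < i → e i = 0 := h.1.2.2

lemma av_e1 {n : ℕ} {e : ℕ → ℕ} (h : e ∈ Av n) : e 1 = 0 := by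
  rcases Nat.lt_or_ge n 1 with h' | h'
  · exact av_zero h 1 h'
  · have := av_lt h 1 le_rfl h'; omega

lemma no102 {n : ℕ} {e : ℕ → ℕ} (h : e ∈ Av n) : ∀ i j k, 1 ≤ i → i < j → j < k → k ≤ n →
    e j < e i → e i < e k → False := by
  intro i j k h1 h2 h3 h4 h5 h6
  exact h.2.1 ⟨i, j, k, h1, h2, h3, h4, h5, h6⟩

lemma no011 {n : ℕ} {e : ℕ → ℕ} (h : e ∈ Av n) : ∀ i j k, 1 ≤ i → i < j → j < k → k ≤ n →
    e i < e j → e j = e k → False := by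
  intro i j k h1 h2 h3 h4 h5 h6
  exact h.2.2 ⟨i, j, k, h1, h2, h3, h4, h5, h6⟩

/-- Positive values are distinct. -/
lemma pos_distinct {n : ℕ} {e : ℕ → ℕ} (h : e ∈ Av n) {j k : ℕ} (h1 : 1 ≤ j) (h2 : j < k)
    (h3 : k ≤ n) (h4 : e j = e k) : e j = 0 := by
  by_contra hne
  rcases Nat.eq_or_lt_of_le h1 with h1' | h1'
  · rw [← h1'] at hne; exact hne (av_e1 h)
  · exact no011 h 1 j k le_rfl h1' h2 h3 (by have := av_e1 h; omega) h4

/-- Once a value drops below `e i`, all later values stay below `e i`. -/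
lemma stay_below {n : ℕ} {e : ℕ → ℕ} (h : e ∈ Av n) {i j k : ℕ} (h1 : 1 ≤ i) (h2 : i < j)
    (h3 : j < k) (h4 : k ≤ n) (h5 : e j < e i) : e k < e i := by
  by_contra hc
  push_neg at hc
  rcases Nat.eq_or_lt_of_le hc with hc' | hc'
  · have := pos_distinct h h1 (by omega : i < k) h4 hc'
    omega
  · exact no102 h i j k h1 h2 h3 h4 h5 hc'

lemma prm_ex (n : ℕ) (e : ℕ → ℕ) : ∃ p, p = n ∨ (1 ≤ p ∧ e (p + 1) < e p) := ⟨n, Or.inl rfl⟩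

/-- The first descent position. -/
noncomputable def prm (n : ℕ) (e : ℕ → ℕ) : ℕ := Nat.find (prm_ex n e)

lemma prm_le (n : ℕ) (e : ℕ → ℕ) : prm n e ≤ n := Nat.find_le (Or.inl rfl)

lemma prm_spec {n : ℕ} (hn : 1 ≤ n) (e : ℕ → ℕ) : PrMax n e (prm n e) := by
  have hfind := Nat.find_spec (prm_ex n e)
  have hmin : ∀ m, m < prm n e → ¬(m = n ∨ (1 ≤ m ∧ e (m + 1) < e m)) :=
    fun m hm => Nat.find_min (prm_ex n e) hm
  have hle := prm_le n e
  have h1 : 1 ≤ prm n e := by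
    by_contra h
    have h0 : prm n e = 0 := by omega
    have hfind' : prm n e = n ∨ 1 ≤ prm n e ∧ e (prm n e + 1) < e (prm n e) := hfind
    rcases hfind' with h' | h' <;> omega
  refine ⟨h1, hle, ?_, ?_⟩
  · intro i hi1 hi2
    have := hmin i hi2
    push_neg at this
    have h2 := this.2 hi1
    omega
  · have hfind' : prm n e = n ∨ 1 ≤ prm n e ∧ e (prm n e + 1) < e (prm n e) := hfind
    rcases hfind' with h' | h'
    · exact Or.inl h'
    · exact Or.inr h'.2

lemma prmax_unique {n : ℕ} {e : ℕ → ℕ} {p p' : ℕ} (h1 : PrMax n e p) (h2 : PrMax n e p') :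
    p = p' := by
  rcases Nat.lt_trichotomy p p' with h | h | h
  · exfalso
    have hd : e (p + 1) < e p := by
      rcases h1.2.2.2 with h' | h'
      · exfalso; have := h2.2.1; omega
      · exact h'
    have := h2.2.2.1 p h1.1 h
    omega
  · exact h
  · exfalso
    have hd : e (p' + 1) < e p' := by
      rcases h2.2.2.2 with h' | h'
      · exfalso; have := h1.2.1; omega
      · exact h'
    have := h1.2.2.1 p' h2.1 h
    omega

lemma hasRank_unique {n : ℕ} {e : ℕ → ℕ} {t t' : ℕ} (h1 : HasRank n e t) (h2 : HasRank n e t') :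
    t = t' := by
  obtain ⟨p, hp, hpe⟩ := h1
  obtain ⟨p', hp', hpe'⟩ := h2
  have hpp : p = p' := prmax_unique hp hp'
  subst hpp
  omega

lemma exists_rank {n : ℕ} (hn : 1 ≤ n) {e : ℕ → ℕ} (he : e ∈ Av n) : ∃ t, HasRank n e t := by
  have hp := prm_spec hn e
  have := av_lt he (prm n e) hp.1 hp.2.1
  exact ⟨prm n e - e (prm n e) - 1, prm n e, hp, by omega⟩

/-- Monotone on the first run. -/
lemma prmax_mono {n : ℕ} {e : ℕ → ℕ} {p : ℕ} (hp : PrMax n e p) :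
    ∀ i j, 1 ≤ i → i ≤ j → j ≤ p → e i ≤ e j := by
  intro i j h1 h2 h3
  induction j with
  | zero => omega
  | succ j ih =>
    rcases Nat.eq_or_lt_of_le h2 with h' | h'
    · rw [h']
    · have hij : i ≤ j := by omega
      have h4 : e j ≤ e (j + 1) := hp.2.2.1 j (by omega) (by omega)
      exact le_trans (ih hij (by omega)) h4

/-- Strictly increasing on positive part of first run. -/
lemma prefix_add {n : ℕ} {e : ℕ → ℕ} {p : ℕ} (he : e ∈ Av n) (hp : PrMax n e p) :
    ∀ j d, 1 ≤ j → j + d ≤ p → 0 < e j → e j + d ≤ e (j + d) := by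
  intro j d
  induction d with
  | zero => intro _ _ _; simpa using le_rfl
  | succ d ih =>
    intro h1 h2 h3
    have ihd := ih h1 (by omega) h3
    have hle : e (j + d) ≤ e (j + d + 1) := hp.2.2.1 (j + d) (by omega) (by omega)
    have hne : e (j + d) ≠ e (j + d + 1) := by
      intro hcontra
      have := pos_distinct he (j := j + d) (k := j + d + 1) (by omega) (by omega)
        (by have := hp.2.1; omega) hcontra
      omega
    have : j + (d + 1) = j + d + 1 := by omega
    rw [this]
    omega

/-- Everything after the first descent is strictly below the run max. -/
lemma after_max {n : ℕ} {e : ℕ → ℕ} {p : ℕ} (he : e ∈ Av n) (hp : PrMax n e p) (hpn : p < n) :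
    ∀ k, p < k → k ≤ n → e k < e p := by
  have hd : e (p + 1) < e p := by
    rcases hp.2.2.2 with h' | h'
    · omega
    · exact h'
  intro k hk1 hk2
  rcases Nat.eq_or_lt_of_le (by omega : p + 1 ≤ k) with h | h
  · rw [← h]; exact hd
  · exact stay_below he hp.1 (by omega) h hk2 hd

lemma prmax_ge2 {n : ℕ} {e : ℕ → ℕ} {p : ℕ} (hn : 2 ≤ n) (he : e ∈ Av n) (hp : PrMax n e p) :
    2 ≤ p := by
  by_contra h
  have hp1 : p = 1 := by have := hp.1; omega
  rcases hp.2.2.2 with h' | h'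
  · omega
  · rw [hp1] at h'
    have := av_e1 he
    omega

/-- An avoider of positive rank has all entries `≤ position - 2`. -/
lemma rank_pos_bound {n : ℕ} {e : ℕ → ℕ} {p : ℕ} (he : e ∈ Av n) (hp : PrMax n e p)
    (hlt : e p + 2 ≤ p) : ∀ j, 2 ≤ j → e j + 2 ≤ j := by
  intro j hj
  by_cases hjn : j ≤ n
  swap
  · have := av_zero he j (by omega); omega
  by_cases hjp : j ≤ p
  · by_contra hcon
    have hej : e j = j - 1 := by have := av_lt he j (by omega) hjn; omega
    have := prefix_add he hp j (p - j) (by omega) (by omega) (by omega)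
    have hjd : j + (p - j) = p := by omega
    rw [hjd] at this
    omega
  · have hpn : p < n := by omega
    have := after_max he hp hpn j (by omega) hjn
    omega

/-- Finiteness. -/
lemma av_finite (n : ℕ) : (Av n).Finite := by
  have hsub : Av n ⊆ (fun (v : Fin (n + 1) → Fin (n + 1)) => fun i : ℕ =>
      if h : i < n + 1 then (v ⟨i, h⟩ : ℕ) else 0) '' Set.univ := by
    rintro e he
    have hb : ∀ i : ℕ, i < n + 1 → e i < n + 1 := by
      intro i hi
      rcases Nat.eq_zero_or_pos i with h0 | h0
      · rw [h0, av_e0 he]; omega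
      · have := av_lt he i h0 (by omega); omega
    refine ⟨fun i => ⟨e i.val, hb i.val i.isLt⟩, trivial, ?_⟩
    funext i
    by_cases h : i < n + 1
    · simp [h]
    · simp only [h, dite_false]
      exact (av_zero he i (by omega)).symm
  exact Set.Finite.subset (Set.finite_univ.image _) hsub

lemma rk_finite (n t : ℕ) : (Rk n t).Finite :=
  (av_finite n).subset (fun e he => he.1)


/-! ### The shift bijection `W` -/

def W (e : ℕ → ℕ) : ℕ → ℕ := fun i => if i = 0 then 0 else e (i - 1)

def V (e : ℕ → ℕ) : ℕ → ℕ := fun i => if i = 0 then 0 else e (i + 1)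

lemma W_apply (e : ℕ → ℕ) (i : ℕ) (hi : 1 ≤ i) : W e i = e (i - 1) := by
  simp [W]; omega

lemma W_V {e : ℕ → ℕ} (h0 : e 0 = 0) (h1 : e 1 = 0) : W (V e) = e := by
  funext i
  match i with
  | 0 => simpa [W] using h0.symm
  | 1 => simpa [W, V] using h1.symm
  | (j + 2) => simp [W, V]

lemma W_mem_av {n : ℕ} {e' : ℕ → ℕ} (he' : e' ∈ Av n) : W e' ∈ Av (n + 1) := by
  refine ⟨⟨by simp [W], ?_, ?_⟩, ?_, ?_⟩
  · intro i h1 h2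
    rw [W_apply e' i h1]
    match i, h1 with
    | 1, _ => rw [av_e0 he']; omega
    | (j + 2), _ =>
      have : e' (j + 1) < j + 1 := av_lt he' (j + 1) (by omega) (by omega)
      simpa using by omega
  · intro i hi
    rw [W_apply e' i (by omega)]
    exact av_zero he' (i - 1) (by omega)
  · -- no 102
    rintro ⟨i, j, k, h1, h2, h3, h4, hb, hc⟩
    rw [W_apply e' i (by omega), W_apply e' j (by omega)] at hb
    rw [W_apply e' i (by omega), W_apply e' k (by omega)] at hc
    rcases Nat.eq_or_lt_of_le h1 with h1' | h1'
    · rw [← h1'] at hb; simp [av_e0 he'] at hb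
    · exact no102 he' (i - 1) (j - 1) (k - 1) (by omega) (by omega) (by omega) (by omega) hb hc
  · -- no 011
    rintro ⟨i, j, k, h1, h2, h3, h4, hb, hc⟩
    rw [W_apply e' i (by omega), W_apply e' j (by omega)] at hb
    rw [W_apply e' j (by omega), W_apply e' k (by omega)] at hc
    rcases Nat.eq_or_lt_of_le h1 with h1' | h1'
    · -- i = 1 : value 0 < e'(j-1) = e'(k-1)
      rw [← h1'] at hb
      rw [av_e0 he'] at hb
      rcases Nat.eq_or_lt_of_le (by omega : 2 ≤ j) with hj' | hj'
      · rw [← hj'] at hb; simp [av_e1 he'] at hb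
      · exact no011 he' 1 (j - 1) (k - 1) le_rfl (by omega) (by omega) (by omega)
          (by rw [av_e1 he']; omega) hc
    · exact no011 he' (i - 1) (j - 1) (k - 1) (by omega) (by omega) (by omega) (by omega) hb hc

lemma contains_W_fwd {n : ℕ} {e' : ℕ → ℕ} {P : ℕ → ℕ → ℕ → Prop}
    (h : Contains n P e') : Contains (n + 1) P (W e') := by
  obtain ⟨i, j, k, h1, h2, h3, h4, hp⟩ := h
  refine ⟨i + 1, j + 1, k + 1, by omega, by omega, by omega, by omega, ?_⟩
  rw [W_apply e' (i+1) (by omega), W_apply e' (j+1) (by omega), W_apply e' (k+1) (by omega)]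
  simpa using hp

lemma prmax_W_fwd {n : ℕ} {e' : ℕ → ℕ} {q : ℕ} (h0 : e' 0 = 0) (hq : PrMax n e' q) :
    PrMax (n + 1) (W e') (q + 1) := by
  refine ⟨by omega, by have := hq.2.1; omega, ?_, ?_⟩
  · intro i h1 h2
    rcases Nat.eq_or_lt_of_le h1 with h1' | h1'
    · rw [← h1']; simp [W, h0]
    · rw [W_apply e' i (by omega), W_apply e' (i + 1) (by omega)]
      have := hq.2.2.1 (i - 1) (by omega) (by omega)
      have hii : i - 1 + 1 = i := by omega
      rw [hii] at this
      simpa using this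
  · rcases hq.2.2.2 with h' | h'
    · left; omega
    · right
      rw [W_apply e' (q + 2) (by omega), W_apply e' (q + 1) (by omega)]
      simpa using h'

lemma prmax_W_bwd {n : ℕ} (hn : 1 ≤ n) {e' : ℕ → ℕ} {p : ℕ} (h0 : e' 0 = 0)
    (hp : PrMax (n + 1) (W e') p) : 2 ≤ p ∧ PrMax n e' (p - 1) := by
  have hp2 : 2 ≤ p := by
    by_contra h
    have hp1 : p = 1 := by have := hp.1; omega
    rcases hp.2.2.2 with h' | h'
    · omega
    · rw [hp1] at h'; simp [W, h0] at h'
  refine ⟨hp2, by omega, by have := hp.2.1; omega, ?_, ?_⟩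
  · intro i h1 h2
    have := hp.2.2.1 (i + 1) (by omega) (by omega)
    rw [W_apply e' (i + 1) (by omega), W_apply e' (i + 2) (by omega)] at this
    simpa using this
  · rcases hp.2.2.2 with h' | h'
    · left; omega
    · right
      rw [W_apply e' (p + 1) (by omega), W_apply e' p (by omega)] at h'
      have h1 : p + 1 - 1 = p - 1 + 1 := by omega
      rw [h1] at h'
      exact h'

lemma W_rk {n t : ℕ} {e' : ℕ → ℕ} (he' : e' ∈ Rk n t) : W e' ∈ Rk (n + 1) (t + 1) := by
  obtain ⟨hav, q, hq, heq⟩ := he'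
  refine ⟨W_mem_av hav, q + 1, prmax_W_fwd (av_e0 hav) hq, ?_⟩
  rw [W_apply e' (q + 1) (by omega)]
  simpa using by omega

lemma V_of_rank_pos {n t : ℕ} {e : ℕ → ℕ} (hn : 1 ≤ n) (he : e ∈ Av (n + 1))
    (hr : HasRank (n + 1) e (t + 1)) : V e ∈ Av n ∧ W (V e) = e ∧ HasRank n (V e) t := by
  obtain ⟨p, hp, heq⟩ := hr
  have hbound : ∀ j, 2 ≤ j → e j + 2 ≤ j := rank_pos_bound he hp (by omega)
  have hWV : W (V e) = e := by
    refine W_V (av_e0 he) ?_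
    have := av_lt he 1 le_rfl (by omega)
    omega
  have hVav : V e ∈ Av n := by
    refine ⟨⟨by simp [V], ?_, ?_⟩, ?_, ?_⟩
    · intro i h1 h2
      have hi0 : i ≠ 0 := by omega
      simp only [V, hi0, if_false]
      have := hbound (i + 1) (by omega)
      omega
    · intro i hi
      have hi0 : i ≠ 0 := by omega
      simp only [V, hi0, if_false]
      exact av_zero he (i + 1) (by omega)
    · intro hc
      have := contains_W_fwd (n := n) hc
      rw [hWV] at this
      exact he.2.1 this
    · intro hc
      have := contains_W_fwd (n := n) hc
      rw [hWV] at this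
      exact he.2.2 this
  refine ⟨hVav, hWV, ?_⟩
  have hp' : PrMax (n + 1) (W (V e)) p := by rw [hWV]; exact hp
  obtain ⟨hp2, hpm⟩ := prmax_W_bwd hn (av_e0 hVav) hp'
  refine ⟨p - 1, hpm, ?_⟩
  have hv : V e (p - 1) = e p := by
    have hp0 : p - 1 ≠ 0 := by omega
    simp only [V, hp0, if_false]
    congr 1
    omega
  rw [hv]
  omega

lemma W_injOn {n : ℕ} : Set.InjOn W (Av n) := by
  intro e1 h1 e2 h2 heq
  funext i
  match i with
  | 0 => rw [av_e0 h1, av_e0 h2]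
  | (j + 1) =>
    have := congrFun heq (j + 2)
    rw [W_apply e1 (j + 2) (by omega), W_apply e2 (j + 2) (by omega)] at this
    simpa using this

/-- M1b : shifting gives a bijection between rank t avoiders of length n and
rank t+1 avoiders of length n+1. -/
lemma ncard_rk_succ {n t : ℕ} (hn : 1 ≤ n) :
    (Rk (n + 1) (t + 1)).ncard = (Rk n t).ncard := by
  have himg : W '' (Rk n t) = Rk (n + 1) (t + 1) := by
    apply Set.Subset.antisymm
    · rintro e ⟨e', he', rfl⟩
      exact W_rk he'
    · rintro e ⟨hav, hr⟩
      obtain ⟨hVav, hWV, hVr⟩ := V_of_rank_pos hn hav hr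
      have hVrk : V e ∈ Rk n t := ⟨hVav, hVr⟩
      exact ⟨V e, hVrk, hWV⟩
  rw [← himg]
  exact Set.ncard_image_of_injOn (W_injOn.mono (fun e he => he.1))

/-- M1a : |Av (n+1)| = |Rk (n+1) 0| + |Av n|. -/
lemma ncard_av_succ {n : ℕ} (hn : 1 ≤ n) :
    (Av (n + 1)).ncard = (Rk (n + 1) 0).ncard + (Av n).ncard := by
  have himg : W '' (Av n) = Av (n + 1) \ Rk (n + 1) 0 := by
    apply Set.Subset.antisymm
    · rintro e ⟨e', he', rfl⟩
      refine ⟨W_mem_av he', ?_⟩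
      intro hmem
      obtain ⟨t', ht'⟩ := exists_rank hn he'
      have hW := W_rk ⟨he', ht'⟩
      have := hasRank_unique hmem.2 hW.2
      omega
    · rintro e ⟨hav, hnot⟩
      obtain ⟨t, ht⟩ := exists_rank (by omega) hav
      have ht0 : t ≠ 0 := by
        intro h
        exact hnot ⟨hav, h ▸ ht⟩
      obtain ⟨s, rfl⟩ : ∃ s, t = s + 1 := ⟨t - 1, by omega⟩
      obtain ⟨hVav, hWV, _⟩ := V_of_rank_pos hn hav ht
      exact ⟨V e, hVav, hWV⟩
  have hsub : Rk (n + 1) 0 ⊆ Av (n + 1) := fun e he => he.1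
  have := Set.ncard_diff_add_ncard_of_subset hsub (av_finite (n + 1))
  rw [← himg] at this
  rw [Set.ncard_image_of_injOn W_injOn] at this
  omega

/-! ### The insertion bijection `Phi` -/

def Phi (q : ℕ) (e : ℕ → ℕ) : ℕ → ℕ :=
  fun i => if i ≤ q then e i else if i = q + 1 then q else e (i - 1)

def Del (q : ℕ) (e : ℕ → ℕ) : ℕ → ℕ := fun i => if i < q then e i else e (i + 1)

lemma Del_apply (q : ℕ) (e : ℕ → ℕ) (i : ℕ) : Del q e i = e (if i < q then i else i + 1) := by
  simp only [Del]; split <;> rfl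

lemma Phi_le {q : ℕ} {e : ℕ → ℕ} {i : ℕ} (h : i ≤ q) : Phi q e i = e i := by simp [Phi, h]

lemma Phi_mid {q : ℕ} {e : ℕ → ℕ} : Phi q e (q + 1) = q := by simp [Phi]

lemma Phi_gt {q : ℕ} {e : ℕ → ℕ} {i : ℕ} (h : q + 2 ≤ i) : Phi q e i = e (i - 1) := by
  have h1 : ¬ i ≤ q := by omega
  have h2 : i ≠ q + 1 := by omega
  simp [Phi, h1, h2]

/-- All values of an avoider are `< prmax`. -/
lemma vals_lt_prmax {n : ℕ} {e' : ℕ → ℕ} {q : ℕ} (he' : e' ∈ Av n) (hq : PrMax n e' q) :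
    ∀ j, 1 ≤ j → j ≤ n → e' j < q := by
  intro j h1 h2
  by_cases hjq : j ≤ q
  · have h3 := prmax_mono hq j q h1 hjq le_rfl
    have h4 := av_lt he' q hq.1 hq.2.1
    omega
  · have h5 := after_max he' hq (by omega) j (by omega) h2
    have h4 := av_lt he' q hq.1 hq.2.1
    omega

lemma phi_val_lt {n : ℕ} {e' : ℕ → ℕ} {q : ℕ} (he' : e' ∈ Av n) (hq : PrMax n e' q) :
    ∀ i, 1 ≤ i → i ≤ n + 1 → i ≠ q + 1 → Phi q e' i < q := by
  intro i h1 h2 h3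
  by_cases hle : i ≤ q
  · rw [Phi_le hle]
    exact vals_lt_prmax he' hq i h1 (by have := hq.2.1; omega)
  · rw [Phi_gt (by omega)]
    exact vals_lt_prmax he' hq (i - 1) (by omega) (by omega)

lemma phi_mem_av {n : ℕ} {e' : ℕ → ℕ} {q : ℕ} (he' : e' ∈ Av n) (hq : PrMax n e' q) :
    Phi q e' ∈ Av (n + 1) := by
  have hq1 : 1 ≤ q := hq.1
  have hqn : q ≤ n := hq.2.1
  have hvlt := phi_val_lt he' hq
  -- generic transfer of a pattern not using position q+1
  have transfer : ∀ (P : ℕ → ℕ → ℕ → Prop) i j k, 1 ≤ i → i < j → j < k → k ≤ n + 1 →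
      i ≠ q + 1 → j ≠ q + 1 → k ≠ q + 1 →
      P (Phi q e' i) (Phi q e' j) (Phi q e' k) → Contains n P e' := by
    intro P i j k h1 h2 h3 h4 hi hj hk hp
    have hval : ∀ m, 1 ≤ m → m ≤ n + 1 → m ≠ q + 1 →
        Phi q e' m = e' (if m ≤ q then m else m - 1) := by
      intro m hm1 hm2 hm3
      by_cases h : m ≤ q
      · simp [Phi_le h, h]
      · rw [if_neg h]; exact Phi_gt (by omega)
    rw [hval i h1 (by omega) hi, hval j (by omega) (by omega) hj, hval k (by omega) h4 hk] at hp
    refine ⟨(if i ≤ q then i else i - 1), (if j ≤ q then j else j - 1),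
      (if k ≤ q then k else k - 1), ?_, ?_, ?_, ?_, hp⟩
    · split <;> omega
    · split <;> split <;> omega
    · split <;> split <;> omega
    · split <;> omega
  refine ⟨⟨?_, ?_, ?_⟩, ?_, ?_⟩
  · rw [Phi_le (by omega : 0 ≤ q)]; exact av_e0 he'
  · intro i h1 h2
    by_cases hle : i ≤ q
    · rw [Phi_le hle]; exact av_lt he' i h1 (by omega)
    · by_cases heq : i = q + 1
      · rw [heq, Phi_mid]; omega
      · rw [Phi_gt (by omega)]
        have := av_lt he' (i - 1) (by omega) (by omega)
        omega
  · intro i hi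
    rw [Phi_gt (by omega)]
    exact av_zero he' (i - 1) (by omega)
  · -- no 102
    rintro ⟨i, j, k, h1, h2, h3, h4, hb, hc⟩
    by_cases hi : i = q + 1
    · -- a = q, need c > q : impossible
      rw [hi, Phi_mid] at hc
      have := hvlt k (by omega) h4 (by omega)
      omega
    · by_cases hj : j = q + 1
      · rw [hj, Phi_mid] at hb
        have := hvlt i h1 (by omega) hi
        omega
      · by_cases hk : k = q + 1
        · -- c = q, i < j ≤ q with descent: contradicts monotonicity
          have hjq : j ≤ q := by omega
          rw [Phi_le hjq, Phi_le (by omega : i ≤ q)] at hb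
          have := prmax_mono hq i j h1 (by omega) hjq
          omega
        · exact he'.2.1 (transfer Pat102 i j k h1 h2 h3 h4 hi hj hk ⟨hb, hc⟩)
  · -- no 011
    rintro ⟨i, j, k, h1, h2, h3, h4, hb, hc⟩
    by_cases hi : i = q + 1
    · rw [hi, Phi_mid] at hb
      have := hvlt j (by omega) (by omega) (by omega)
      omega
    · by_cases hj : j = q + 1
      · rw [hj, Phi_mid] at hc
        have := hvlt k (by omega) h4 (by omega)
        omega
      · by_cases hk : k = q + 1
        · rw [hk, Phi_mid] at hc
          have := hvlt j (by omega) (by omega) hj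
          omega
        · exact he'.2.2 (transfer Pat011 i j k h1 h2 h3 h4 hi hj hk ⟨hb, hc⟩)

lemma phi_prmax {n : ℕ} {e' : ℕ → ℕ} {q : ℕ} (he' : e' ∈ Av n) (hq : PrMax n e' q) :
    PrMax (n + 1) (Phi q e') (q + 1) := by
  refine ⟨by omega, by have := hq.2.1; omega, ?_, ?_⟩
  · intro i h1 h2
    by_cases hiq : i < q
    · rw [Phi_le (by omega), Phi_le (by omega)]
      exact hq.2.2.1 i h1 hiq
    · have hieq : i = q := by omega
      rw [hieq, Phi_le le_rfl, Phi_mid]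
      have := av_lt he' q hq.1 hq.2.1
      omega
  · by_cases hqn : q = n
    · left; omega
    · right
      rw [Phi_mid, Phi_gt (by omega)]
      have : q + 1 + 1 - 1 = q + 1 := by omega
      rw [this]
      exact vals_lt_prmax he' hq (q + 1) (by omega) (by have := hq.2.1; omega)

/-- The sets `Iset` and `Cset`. -/
def Iset (m : ℕ) : Set (ℕ → ℕ) :=
  {e | e ∈ Rk m 0 ∧ ∀ p, PrMax m e p → (p = m ∨ e (p + 1) < e (p - 1))}

def Cset (m : ℕ) : Set (ℕ → ℕ) :=
  {e | e ∈ Rk m 0 ∧ ∀ p, PrMax m e p → (p < m ∧ e (p - 1) ≤ e (p + 1))}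

lemma rk0_partition {m : ℕ} (hm : 1 ≤ m) : Rk m 0 = Iset m ∪ Cset m := by
  apply Set.Subset.antisymm
  · intro e he
    obtain ⟨hav, p0, hp0, heq0⟩ := he
    by_cases hcase : p0 = m ∨ e (p0 + 1) < e (p0 - 1)
    · left
      refine ⟨⟨hav, p0, hp0, heq0⟩, ?_⟩
      intro p hp
      rw [prmax_unique hp hp0]
      exact hcase
    · right
      push_neg at hcase
      refine ⟨⟨hav, p0, hp0, heq0⟩, ?_⟩
      intro p hp
      rw [prmax_unique hp hp0]
      have := hp0.2.1
      exact ⟨by omega, by omega⟩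
  · rintro e (he | he) <;> exact he.1

lemma iset_cset_disjoint {m : ℕ} (hm : 1 ≤ m) : Disjoint (Iset m) (Cset m) := by
  rw [Set.disjoint_left]
  rintro e ⟨⟨hav, p0, hp0, heq0⟩, hI⟩ ⟨_, hC⟩
  have h1 := hI p0 hp0
  have h2 := hC p0 hp0
  omega

/-- M2 : the insertion `Phi` is a bijection from `Av n` onto `Iset (n+1)`. -/
lemma ncard_iset {n : ℕ} (hn : 1 ≤ n) : (Iset (n + 1)).ncard = (Av n).ncard := by
  have himg : (fun e' => Phi (prm n e') e') '' (Av n) = Iset (n + 1) := by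
    apply Set.Subset.antisymm
    · rintro e ⟨e', he', rfl⟩
      dsimp only
      have hq := prm_spec hn e'
      set q := prm n e' with hqdef
      refine ⟨⟨phi_mem_av he' hq, q + 1, phi_prmax he' hq, by rw [Phi_mid]⟩, ?_⟩
      intro p hp
      have hpq : p = q + 1 := prmax_unique hp (phi_prmax he' hq)
      subst hpq
      by_cases hqn : q = n
      · left; omega
      · right
        rw [Phi_gt (by omega), Phi_le (by omega : q + 1 - 1 ≤ q)]
        have h1 : q + 1 + 1 - 1 = q + 1 := by omega
        rw [h1]
        rcases hq.2.2.2 with h' | h'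
        · omega
        · exact h'
    · rintro e ⟨⟨hav, p0, hp0, heq0⟩, hI⟩
      have hp2 : 2 ≤ p0 := prmax_ge2 (by omega) hav hp0
      have hpn : p0 ≤ n + 1 := hp0.2.1
      have hIp := hI p0 hp0
      have hep : e p0 = p0 - 1 := by omega
      -- the deleted sequence
      set e' := Del p0 e with he'def
      have hafter : ∀ k, p0 < k → k ≤ n + 1 → e k < e p0 := by
        intro k hk1 hk2
        exact after_max hav hp0 (by omega) k hk1 hk2
      have he'av : e' ∈ Av n := by
        refine ⟨⟨?_, ?_, ?_⟩, ?_, ?_⟩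
        · simp only [he'def, Del, if_pos (by omega : 0 < p0)]
          exact av_e0 hav
        · intro i h1 h2
          by_cases hip : i < p0
          · simp only [he'def, Del, if_pos hip]
            exact av_lt hav i h1 (by omega)
          · simp only [he'def, Del, if_neg hip]
            have := hafter (i + 1) (by omega) (by omega)
            omega
        · intro i hi
          simp only [he'def, Del]
          rw [if_neg (by omega)]
          exact av_zero hav (i + 1) (by omega)
        · rintro ⟨i, j, k, h1, h2, h3, h4, hb, hc⟩
          refine hav.2.1 ⟨(if i < p0 then i else i + 1), (if j < p0 then j else j + 1),
            (if k < p0 then k else k + 1), ?_, ?_, ?_, ?_, ?_, ?_⟩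
          · split <;> omega
          · split <;> split <;> omega
          · split <;> split <;> omega
          · split <;> omega
          · rw [he'def, Del_apply, Del_apply] at hb; exact hb
          · rw [he'def, Del_apply, Del_apply] at hc; exact hc
        · rintro ⟨i, j, k, h1, h2, h3, h4, hb, hc⟩
          refine hav.2.2 ⟨(if i < p0 then i else i + 1), (if j < p0 then j else j + 1),
            (if k < p0 then k else k + 1), ?_, ?_, ?_, ?_, ?_, ?_⟩
          · split <;> omega
          · split <;> split <;> omega
          · split <;> split <;> omega
          · split <;> omega
          · rw [he'def, Del_apply, Del_apply] at hb; exact hb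
          · rw [he'def, Del_apply, Del_apply] at hc; exact hc
      have he'pm : PrMax n e' (p0 - 1) := by
        refine ⟨by omega, by omega, ?_, ?_⟩
        · intro i h1 h2
          simp only [he'def, Del, if_pos (by omega : i < p0), if_pos (by omega : i + 1 < p0)]
          exact hp0.2.2.1 i h1 (by omega)
        · by_cases hp0n : p0 = n + 1
          · left; omega
          · right
            have hd : e (p0 + 1) < e (p0 - 1) := by
              rcases hIp with h' | h'
              · omega
              · exact h'
            have h1 : p0 - 1 + 1 = p0 := by omega
            simp only [he'def, Del, h1, if_neg (lt_irrefl p0), if_pos (by omega : p0 - 1 < p0)]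
            exact hd
      have hprm : prm n e' = p0 - 1 := prmax_unique (prm_spec hn e') he'pm
      refine ⟨e', he'av, ?_⟩
      dsimp only
      rw [hprm]
      funext i
      by_cases hip : i ≤ p0 - 1
      · rw [Phi_le hip]
        simp only [he'def, Del, if_pos (by omega : i < p0)]
      · by_cases hieq : i = p0
        · rw [hieq]
          have h1 : ¬ p0 ≤ p0 - 1 := by omega
          have h2 : p0 = (p0 - 1) + 1 := by omega
          simp only [Phi, if_neg h1, if_pos h2]
          omega
        · rw [Phi_gt (by omega)]
          simp only [he'def, Del, if_neg (by omega : ¬ i - 1 < p0)]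
          congr 1
          omega
  have hinj : Set.InjOn (fun e' => Phi (prm n e') e') (Av n) := by
    intro e1 h1 e2 h2 heq
    have hq1 := prm_spec hn e1
    have hq2 := prm_spec hn e2
    have hpm1 : PrMax (n + 1) (Phi (prm n e1) e1) (prm n e1 + 1) := phi_prmax h1 hq1
    have hpm2 : PrMax (n + 1) (Phi (prm n e2) e2) (prm n e2 + 1) := phi_prmax h2 hq2
    simp only at heq
    rw [heq] at hpm1
    have hqq : prm n e1 = prm n e2 := by
      have := prmax_unique hpm1 hpm2
      omega
    funext i
    by_cases hip : i ≤ prm n e1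
    · have := congrFun heq i
      rwa [Phi_le hip, Phi_le (show i ≤ prm n e2 by omega)] at this
    · have := congrFun heq (i + 1)
      rw [Phi_gt (show prm n e1 + 2 ≤ i + 1 by omega),
        Phi_gt (show prm n e2 + 2 ≤ i + 1 by omega)] at this
      simpa using this
  rw [← himg]
  exact Set.ncard_image_of_injOn hinj

/-- Combined M2. -/
lemma ncard_rk0_split {n : ℕ} (hn : 1 ≤ n) :
    (Rk (n + 1) 0).ncard = (Av n).ncard + (Cset (n + 1)).ncard := by
  rw [rk0_partition (by omega : 1 ≤ n + 1)]
  rw [Set.ncard_union_eq (iset_cset_disjoint (by omega))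
    ((av_finite (n+1)).subset (fun e he => he.1.1))
    ((av_finite (n+1)).subset (fun e he => he.1.1))]
  rw [ncard_iset hn]

/-! ### The swap bijection -/

def rmp (x i : ℕ) : ℕ := if i = x then x + 1 else if i = x + 1 then x else i

def Swp (x : ℕ) (e : ℕ → ℕ) : ℕ → ℕ := fun i => e (rmp x i)

lemma swp_at_x {x : ℕ} {e : ℕ → ℕ} : Swp x e x = e (x + 1) := by simp [Swp, rmp]

lemma swp_at_x1 {x : ℕ} {e : ℕ → ℕ} : Swp x e (x + 1) = e x := by
  simp [Swp, rmp]

lemma swp_other {x : ℕ} {e : ℕ → ℕ} {i : ℕ} (h1 : i ≠ x) (h2 : i ≠ x + 1) :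
    Swp x e i = e i := by simp [Swp, rmp, h1, h2]

lemma swp_invol (x : ℕ) (e : ℕ → ℕ) : Swp x (Swp x e) = e := by
  funext i
  by_cases h1 : i = x
  · rw [h1, swp_at_x, swp_at_x1]
  · by_cases h2 : i = x + 1
    · rw [h2, swp_at_x1, swp_at_x]
    · rw [swp_other h1 h2, swp_other h1 h2]

/-- Decomposition of patterns in a swapped sequence. -/
lemma swp_contains {N x : ℕ} {e : ℕ → ℕ} {P : ℕ → ℕ → ℕ → Prop} (hx : 1 ≤ x)
    (hxN : x + 1 ≤ N) (h : Contains N P (Swp x e)) :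
    Contains N P e ∨ (∃ i, 1 ≤ i ∧ i < x ∧ P (e i) (e (x + 1)) (e x)) ∨
      (∃ k, x + 1 < k ∧ k ≤ N ∧ P (e (x + 1)) (e x) (e k)) := by
  obtain ⟨i, j, k, h1, h2, h3, h4, hp⟩ := h
  by_cases hc1 : j = x ∧ k = x + 1
  · right; left
    refine ⟨i, h1, by omega, ?_⟩
    rw [show (Swp x e) i = e i from swp_other (by omega) (by omega),
      hc1.1, hc1.2, swp_at_x, swp_at_x1] at hp
    exact hp
  · by_cases hc2 : i = x ∧ j = x + 1
    · right; right
      refine ⟨k, by omega, h4, ?_⟩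
      rw [show (Swp x e) k = e k from swp_other (by omega) (by omega),
        hc2.1, hc2.2, swp_at_x, swp_at_x1] at hp
      exact hp
    · left
      have hval : ∀ m, Swp x e m = e (rmp x m) := fun m => rfl
      rw [hval i, hval j, hval k] at hp
      refine ⟨rmp x i, rmp x j, rmp x k, ?_, ?_, ?_, ?_, hp⟩ <;>
        · simp only [rmp]
          split_ifs <;> omega

/-- rank-1 avoiders have prmax ≥ 3 when n ≥ 3 -/
lemma rank1_prmax_ge3 {n : ℕ} {e : ℕ → ℕ} {q : ℕ} (hn : 3 ≤ n) (he : e ∈ Av n)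
    (hq : PrMax n e q) (heq : q = e q + 2) : 3 ≤ q := by
  have h2 : 2 ≤ q := prmax_ge2 (by omega) he hq
  by_contra h
  have hq2 : q = 2 := by omega
  have he2 : e 2 = 0 := by rw [hq2] at heq; omega
  rcases hq.2.2.2 with h' | h'
  · omega
  · rw [hq2, he2] at h'
    omega

/-- Forward: swap an element of `Rk (n+1) 1` into `Cset (n+1)`. -/
lemma swap_rk1_to_cset {n : ℕ} (hn : 2 ≤ n) {e : ℕ → ℕ} (he : e ∈ Rk (n + 1) 1) :
    ∀ q, PrMax (n + 1) e q → Swp (q - 1) e ∈ Cset (n + 1) ∧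
      PrMax (n + 1) (Swp (q - 1) e) (q - 1) := by
  intro q hq
  obtain ⟨hav, q0, hq0, heq0⟩ := he
  have hqq : q = q0 := prmax_unique hq hq0
  subst hqq
  have heq : q = e q + 2 := by omega
  have hq3 : 3 ≤ q := rank1_prmax_ge3 (by omega) hav hq heq
  have hqn : q ≤ n + 1 := hq.2.1
  set x := q - 1 with hxdef
  have hx1 : x + 1 = q := by omega
  -- strict ascent into the max
  have hasc : e x < e q := by
    have hle : e x ≤ e q := prmax_mono hq x q (by omega) (by omega) le_rfl
    rcases Nat.eq_or_lt_of_le hle with h' | h'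
    · exfalso
      have := pos_distinct hav (j := x) (k := q) (by omega) (by omega) (by omega) h'
      omega
    · exact h'
  -- all other values are < e q
  have hmax : ∀ i, 1 ≤ i → i ≤ n + 1 → i ≠ q → e i < e q := by
    intro i hi1 hi2 hi3
    by_cases hiq : i < q
    · have := prmax_mono hq i x hi1 (by omega) (by omega)
      omega
    · exact after_max hav hq (by omega) i (by omega) hi2
  -- values before x
  have hbefore : ∀ i, 1 ≤ i → i < x → e i ≤ e x :=
    fun i hi1 hi2 => prmax_mono hq i x hi1 (by omega) (by omega)
  set f := Swp x e with hfdef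
  have hfav : f ∈ Av (n + 1) := by
    refine ⟨⟨?_, ?_, ?_⟩, ?_, ?_⟩
    · rw [hfdef, swp_other (i := 0) (by omega) (by omega)]
      exact av_e0 hav
    · intro i hi1 hi2
      by_cases h1 : i = x
      · rw [hfdef, h1, swp_at_x, hx1]
        omega
      · by_cases h2 : i = x + 1
        · rw [hfdef, h2, swp_at_x1]
          have := av_lt hav x (by omega) (by omega)
          omega
        · rw [hfdef, swp_other h1 h2]
          exact av_lt hav i hi1 hi2
    · intro i hi
      rw [hfdef, swp_other (i := i) (by omega) (by omega)]
      exact av_zero hav i hi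
    · intro hcon
      rcases swp_contains (by omega) (by omega) hcon with h' | ⟨i, hi1, hi2, hpat⟩ | ⟨k, hk1, hk2, hpat⟩
      · exact hav.2.1 h'
      · -- P (e i) (e q) (e x) : e q < e i impossible
        rw [hx1] at hpat
        have := hmax i hi1 (by omega) (by omega)
        rcases hpat with ⟨hb, hc⟩
        omega
      · -- P (e q) (e x) (e k) : need e k > e q impossible
        rw [hx1] at hpat
        have := hmax k (by omega) hk2 (by omega)
        rcases hpat with ⟨hb, hc⟩
        omega
    · intro hcon
      rcases swp_contains (by omega) (by omega) hcon with h' | ⟨i, hi1, hi2, hpat⟩ | ⟨k, hk1, hk2, hpat⟩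
      · exact hav.2.2 h'
      · rw [hx1] at hpat
        rcases hpat with ⟨hb, hc⟩
        omega
      · rw [hx1] at hpat
        rcases hpat with ⟨hb, hc⟩
        omega
  have hfpm : PrMax (n + 1) f x := by
    refine ⟨by omega, by omega, ?_, ?_⟩
    · intro i hi1 hi2
      have hi3 : i + 1 ≤ x := by omega
      rw [hfdef, swp_other (i := i) (by omega) (by omega)]
      by_cases h1 : i + 1 = x
      · rw [h1, swp_at_x, hx1]
        have := prmax_mono hq i x hi1 (by omega) (by omega)
        omega
      · rw [swp_other (i := i + 1) h1 (by omega)]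
        exact hq.2.2.1 i hi1 (by omega)
    · right
      have e1 : f (x + 1) = e x := by rw [hfdef]; exact swp_at_x1
      have e2 : f x = e q := by rw [hfdef, swp_at_x, hx1]
      rw [e1, e2]
      exact hasc
  have hfx : f x = e q := by rw [hfdef, swp_at_x, hx1]
  refine ⟨⟨⟨hfav, x, hfpm, by omega⟩, ?_⟩, hfpm⟩
  intro p hp
  have hpx : p = x := prmax_unique hp hfpm
  rw [hpx]
  refine ⟨by omega, ?_⟩
  have e1 : f (x + 1) = e x := by rw [hfdef]; exact swp_at_x1
  have e2 : f (x - 1) = e (x - 1) := by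
    rw [hfdef, swp_other (i := x - 1) (by omega) (by omega)]
  rw [e1, e2]
  exact prmax_mono hq (x - 1) x (by omega) (by omega) (by omega)

/-- Backward: swap an element of `Cset (n+1)` into `Rk (n+1) 1`. -/
lemma swap_cset_to_rk1 {n : ℕ} (hn : 2 ≤ n) {e : ℕ → ℕ} (he : e ∈ Cset (n + 1)) :
    ∀ p, PrMax (n + 1) e p → Swp p e ∈ Rk (n + 1) 1 ∧
      PrMax (n + 1) (Swp p e) (p + 1) := by
  intro p hp
  obtain ⟨⟨hav, p0, hp0, heq0⟩, hC⟩ := he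
  have hpp : p = p0 := prmax_unique hp hp0
  subst hpp
  have hep : e p = p - 1 := by omega
  have hp2 : 2 ≤ p := prmax_ge2 (by omega) hav hp
  obtain ⟨hpn, hCle⟩ := hC p hp
  have hd : e (p + 1) < e p := by
    rcases hp.2.2.2 with h' | h'
    · omega
    · exact h'
  have hmax : ∀ i, 1 ≤ i → i ≤ n + 1 → i ≠ p → e i < e p := by
    intro i hi1 hi2 hi3
    by_cases hiq : i < p
    · have h1 := prmax_mono hp i (p - 1) hi1 (by omega) (by omega)
      have h2 := prmax_mono hp (p - 1) p (by omega) (by omega) le_rfl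
      rcases Nat.eq_or_lt_of_le (le_trans h1 h2) with h' | h'
      · exfalso
        have := pos_distinct hav (j := i) (k := p) hi1 (by omega) (by omega) h'
        omega
      · exact h'
    · exact after_max hav hp (by omega) i (by omega) hi2
  set f := Swp p e with hfdef
  have hfp1 : f (p + 1) = e p := by rw [hfdef]; exact swp_at_x1
  have hfp : f p = e (p + 1) := by rw [hfdef]; exact swp_at_x
  have hfav : f ∈ Av (n + 1) := by
    refine ⟨⟨?_, ?_, ?_⟩, ?_, ?_⟩
    · rw [hfdef, swp_other (i := 0) (by omega) (by omega)]
      exact av_e0 hav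
    · intro i hi1 hi2
      by_cases h1 : i = p
      · rw [h1, hfp]; omega
      · by_cases h2 : i = p + 1
        · rw [h2, hfp1]; omega
        · rw [hfdef, swp_other h1 h2]
          exact av_lt hav i hi1 hi2
    · intro i hi
      rw [hfdef, swp_other (i := i) (by omega) (by omega)]
      exact av_zero hav i hi
    · intro hcon
      rcases swp_contains (by omega) (by omega) hcon with h' | ⟨i, hi1, hi2, hpat⟩ | ⟨k, hk1, hk2, hpat⟩
      · exact hav.2.1 h'
      · -- P (e i) (e (p+1)) (e p) i.e. 102: e (p+1) < e i < e p : but e i ≤ e (p-1) ≤ e (p+1)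
        rcases hpat with ⟨hb, hc⟩
        have := prmax_mono hp i (p - 1) hi1 (by omega) (by omega)
        omega
      · -- P (e (p+1)) (e p) (e k) : 102 : e p < e (p+1) false
        rcases hpat with ⟨hb, hc⟩
        omega
    · intro hcon
      rcases swp_contains (by omega) (by omega) hcon with h' | ⟨i, hi1, hi2, hpat⟩ | ⟨k, hk1, hk2, hpat⟩
      · exact hav.2.2 h'
      · -- 011 : e i < e (p+1) = e p : but e (p+1) < e p
        rcases hpat with ⟨hb, hc⟩
        omega
      · -- 011 : e (p+1) < e p = e k : but e k < e p
        rcases hpat with ⟨hb, hc⟩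
        have := hmax k (by omega) hk2 (by omega)
        omega
  have hfpm : PrMax (n + 1) f (p + 1) := by
    refine ⟨by omega, by omega, ?_, ?_⟩
    · intro i hi1 hi2
      by_cases h1 : i = p
      · rw [h1, hfp, hfp1]
        omega
      · have hi3 : i < p := by omega
        rw [hfdef, swp_other (i := i) (by omega) (by omega)]
        by_cases h2 : i + 1 = p
        · rw [h2, ← hfdef, hfp]
          have := prmax_mono hp i (p - 1) hi1 (by omega) (by omega)
          omega
        · rw [swp_other (i := i + 1) h2 (by omega)]
          exact hp.2.2.1 i hi1 (by omega)
    · by_cases hpn' : p + 1 = n + 1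
      · left; omega
      · right
        rw [hfp1, hfdef, swp_other (i := p + 2) (by omega) (by omega)]
        exact hmax (p + 2) (by omega) (by omega) (by omega)
  refine ⟨⟨hfav, p + 1, hfpm, by rw [hfp1]; omega⟩, hfpm⟩

/-- M3 : |Cset (n+1)| = |Rk (n+1) 1| for n ≥ 2. -/
lemma ncard_cset {n : ℕ} (hn : 2 ≤ n) : (Cset (n + 1)).ncard = (Rk (n + 1) 1).ncard := by
  have himg : (fun e => Swp (prm (n + 1) e - 1) e) '' (Rk (n + 1) 1) = Cset (n + 1) := by
    apply Set.Subset.antisymm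
    · rintro f ⟨e, he, rfl⟩
      exact (swap_rk1_to_cset hn he (prm (n + 1) e) (prm_spec (by omega) e)).1
    · intro e he
      have hp := prm_spec (by omega : 1 ≤ n + 1) e
      obtain ⟨hrk1, hpm'⟩ := swap_cset_to_rk1 hn he (prm (n + 1) e) hp
      refine ⟨Swp (prm (n + 1) e) e, hrk1, ?_⟩
      dsimp only
      have hprm2 : prm (n + 1) (Swp (prm (n + 1) e) e) = prm (n + 1) e + 1 :=
        prmax_unique (prm_spec (by omega) _) hpm'
      rw [hprm2]
      simpa using swp_invol (prm (n + 1) e) e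
  have hinj : Set.InjOn (fun e => Swp (prm (n + 1) e - 1) e) (Rk (n + 1) 1) := by
    intro e1 h1 e2 h2 heq
    have hp1 := prm_spec (by omega : 1 ≤ n + 1) e1
    have hp2 := prm_spec (by omega : 1 ≤ n + 1) e2
    have hm1 := (swap_rk1_to_cset hn h1 (prm (n + 1) e1) hp1).2
    have hm2 := (swap_rk1_to_cset hn h2 (prm (n + 1) e2) hp2).2
    simp only at heq
    rw [heq] at hm1
    have hq : prm (n + 1) e1 = prm (n + 1) e2 := by
      have h3 := prmax_unique hm1 hm2
      obtain ⟨hav1, q1, hq1, heq1⟩ := h1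
      obtain ⟨hav2, q2, hq2, heq2⟩ := h2
      have e1q : prm (n + 1) e1 = q1 := prmax_unique hp1 hq1
      have e2q : prm (n + 1) e2 = q2 := prmax_unique hp2 hq2
      have g1 : 3 ≤ prm (n + 1) e1 := by
        rw [e1q]; exact rank1_prmax_ge3 (by omega) hav1 hq1 (by omega)
      have g2 : 3 ≤ prm (n + 1) e2 := by
        rw [e2q]; exact rank1_prmax_ge3 (by omega) hav2 hq2 (by omega)
      omega
    rw [hq] at heq
    have := congrArg (Swp (prm (n + 1) e2 - 1)) heq
    rwa [swp_invol, swp_invol] at this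
  rw [← himg]
  exact Set.ncard_image_of_injOn hinj

/-! ### Base cases -/

lemma av_one : Av 1 = {fun _ => 0} := by
  apply Set.Subset.antisymm
  · intro e he
    simp only [Set.mem_singleton_iff]
    funext i
    match i with
    | 0 => exact av_e0 he
    | 1 => exact av_e1 he
    | (j + 2) => exact av_zero he _ (by omega)
  · intro e he
    simp only [Set.mem_singleton_iff] at he
    subst he
    refine ⟨⟨rfl, ?_, fun i _ => rfl⟩, ?_, ?_⟩
    · intro i h1 h2
      show 0 < i
      omega
    · rintro ⟨i, j, k, h1, h2, h3, h4, _⟩; omega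
    · rintro ⟨i, j, k, h1, h2, h3, h4, _⟩; omega

lemma ncard_av_one : (Av 1).ncard = 1 := by rw [av_one]; exact Set.ncard_singleton _

def gbase : ℕ → ℕ := fun i => if i = 2 then 1 else 0

lemma rk_two : Rk 2 0 = {gbase} := by
  apply Set.Subset.antisymm
  · rintro e ⟨hav, p, hp, heq⟩
    have hp2 : p = 2 := by
      rcases Nat.lt_or_ge p 2 with h | h
      · exfalso
        have hp1 : p = 1 := by have := hp.1; omega
        rcases hp.2.2.2 with h' | h'
        · omega
        · rw [hp1] at h'
          have := av_e1 hav
          omega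
      · have := hp.2.1; omega
    have he2 : e 2 = 1 := by rw [hp2] at heq; omega
    simp only [Set.mem_singleton_iff]
    funext i
    match i with
    | 0 => rw [av_e0 hav]; rfl
    | 1 => rw [av_e1 hav]; rfl
    | 2 => rw [he2]; rfl
    | (j + 3) => rw [av_zero hav _ (by omega)]; simp [gbase]
  · intro e he
    simp only [Set.mem_singleton_iff] at he
    subst he
    refine ⟨⟨⟨rfl, ?_, ?_⟩, ?_, ?_⟩, 2, ⟨by omega, le_rfl, ?_, Or.inl rfl⟩, by simp [gbase]⟩
    · intro i h1 h2
      interval_cases i <;> simp [gbase]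
    · intro i hi
      have : i ≠ 2 := by omega
      simp [gbase, this]
    · rintro ⟨i, j, k, h1, h2, h3, h4, _⟩; omega
    · rintro ⟨i, j, k, h1, h2, h3, h4, _⟩; omega
    · intro i h1 h2
      have hi : i = 1 := by omega
      subst hi
      simp [gbase]

lemma ncard_rk_two : (Rk 2 0).ncard = 1 := by rw [rk_two]; exact Set.ncard_singleton _

/-! ### Assembly -/

lemma main_counts : ∀ k : ℕ, (Rk (k + 2) 0).ncard = Nat.fib (2 * k + 2) ∧
    (Av (k + 2)).ncard = Nat.fib (2 * k + 3) := by
  intro k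
  induction k with
  | zero =>
    constructor
    · rw [ncard_rk_two]; decide
    · have h := ncard_av_succ (n := 1) le_rfl
      rw [ncard_rk_two, ncard_av_one] at h
      rw [h]; decide
  | succ k ih =>
    obtain ⟨ihb, iha⟩ := ih
    have hb : (Rk (k + 3) 0).ncard = Nat.fib (2 * (k + 1) + 2) := by
      have h1 := ncard_rk0_split (n := k + 2) (by omega)
      have h2 := ncard_cset (n := k + 2) (by omega)
      have h3 := ncard_rk_succ (n := k + 2) (t := 0) (by omega)
      have hfib : Nat.fib (2 * k + 2 + 2) = Nat.fib (2 * k + 2) + Nat.fib (2 * k + 3) := by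
        rw [Nat.fib_add_two]
      have hidx : 2 * (k + 1) + 2 = 2 * k + 2 + 2 := by omega
      rw [hidx, hfib]
      have : (k + 2) + 1 = k + 3 := by omega
      rw [this] at h1 h2 h3
      rw [h1, h2, h3, ihb, iha]
      omega
    refine ⟨hb, ?_⟩
    have h1 := ncard_av_succ (n := k + 2) (by omega)
    have : (k + 2) + 1 = k + 3 := by omega
    rw [this] at h1
    rw [h1, hb, iha]
    have hidx : 2 * (k + 1) + 3 = 2 * k + 3 + 2 := by omega
    have hidx2 : 2 * (k + 1) + 2 = 2 * k + 3 + 1 := by omega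
    have hfib : Nat.fib (2 * k + 3 + 2) = Nat.fib (2 * k + 3) + Nat.fib (2 * k + 3 + 1) :=
      Nat.fib_add_two
    rw [hidx, hidx2, hfib]
    omega

lemma rk_count : ∀ t n : ℕ, 2 ≤ n → t ≤ n - 2 →
    (Rk n t).ncard = Nat.fib (2 * n - 2 * t - 2) := by
  intro t
  induction t with
  | zero =>
    intro n hn _
    obtain ⟨k, rfl⟩ : ∃ k, n = k + 2 := ⟨n - 2, by omega⟩
    have := (main_counts k).1
    have hidx : 2 * (k + 2) - 2 * 0 - 2 = 2 * k + 2 := by omega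
    rw [hidx]
    exact this
  | succ t ih =>
    intro n hn ht
    obtain ⟨m, rfl⟩ : ∃ m, n = m + 1 := ⟨n - 1, by omega⟩
    have h1 := ncard_rk_succ (n := m) (t := t) (by omega)
    have h2 := ih m (by omega) (by omega)
    rw [h1, h2]
    congr 1
    omega

end S3A

theorem stmt3 (n t : ℕ) (hn : 2 ≤ n) (ht : t ≤ n - 2) :
    {e : ℕ → ℕ | IsInvSeq n e ∧ ¬ Contains n Pat102 e ∧ ¬ Contains n Pat011 e ∧
      HasRank n e t}.ncard = Nat.fib (2 * n - 2 * t - 2) := by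
  have hset : {e : ℕ → ℕ | IsInvSeq n e ∧ ¬ Contains n Pat102 e ∧ ¬ Contains n Pat011 e ∧
      HasRank n e t} = S3A.Rk n t := by
    ext e
    simp only [Set.mem_setOf_eq, S3A.Rk, S3A.Av]
    tauto
  rw [hset]
  exact S3A.rk_count t n hn ht
end

section
/- For integers n ≥ 2 and 0 ≤ t ≤ n-2, the number of inversion sequences of length n avoiding both 102 and 012 with rank t equals (t+1) · F_{2n-2t-3}, where F_k is the k-th Fibonacci number. -/
open Finset

/-- Finset of lists of length `q` with entries in `[0,b]` whose positive entries
are weakly decreasing. -/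
def Tl : ℕ → ℕ → Finset (List ℕ)
  | 0, _ => {[]}
  | q+1, b => ((Tl q b).image (List.cons 0)) ∪
      (Finset.range b).biUnion (fun v => (Tl q (v+1)).image (List.cons (v+1)))

def Ok (b : ℕ) (l : List ℕ) : Prop :=
  (∀ x ∈ l, x ≤ b) ∧ l.Pairwise (fun a c => c ≤ a ∨ a = 0)

lemma mem_Tl : ∀ {q b : ℕ} {l : List ℕ}, l ∈ Tl q b ↔ l.length = q ∧ Ok b l := by
  intro q
  induction q with
  | zero =>
    intro b l
    constructor
    · intro h
      simp only [Tl, Finset.mem_singleton] at h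
      subst h
      exact ⟨rfl, fun x hx => absurd hx List.not_mem_nil, List.Pairwise.nil⟩
    · rintro ⟨hl, -⟩
      rw [List.length_eq_zero_iff] at hl
      simp [Tl, hl]
  | succ q ih =>
    intro b l
    simp only [Tl, Finset.mem_union, Finset.mem_image, Finset.mem_biUnion, Finset.mem_range]
    constructor
    · rintro (⟨l', hl', rfl⟩ | ⟨v, hv, l', hl', rfl⟩)
      · obtain ⟨hlen, hb, hp⟩ := ih.1 hl'
        exact ⟨by simp [hlen], fun x hx => by
            rcases List.mem_cons.1 hx with rfl | hx
            · exact Nat.zero_le _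
            · exact hb x hx,
          List.Pairwise.cons (fun c _ => Or.inr rfl) hp⟩
      · obtain ⟨hlen, hb, hp⟩ := ih.1 hl'
        refine ⟨by simp [hlen], fun x hx => ?_, List.Pairwise.cons (fun c hc => Or.inl (hb c hc)) hp⟩
        rcases List.mem_cons.1 hx with rfl | hx
        · omega
        · exact le_trans (hb x hx) (by omega)
    · rintro ⟨hlen, hb, hp⟩
      match l with
      | [] => simp at hlen
      | x :: l' =>
        simp only [List.length_cons, Nat.succ.injEq] at hlen
        rw [List.pairwise_cons] at hp
        match x with
        | 0 =>
          exact Or.inl ⟨l', ih.2 ⟨hlen, fun c hc => hb c (List.mem_cons_of_mem _ hc), hp.2⟩, rfl⟩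
        | v+1 =>
          refine Or.inr ⟨v, ?_, l', ih.2 ⟨hlen, fun c hc => ?_, hp.2⟩, rfl⟩
          · have := hb (v+1) List.mem_cons_self; omega
          · rcases hp.1 c hc with h | h
            · exact h
            · omega

def ATl : ℕ → ℕ → Finset (List ℕ)
  | 0, _ => {[]}
  | q+1, m => ((Tl q m).image (List.cons 0)) ∪
      (Finset.range (m-1)).biUnion (fun v => (Tl q (v+1)).image (List.cons (v+1)))

lemma mem_ATl {q m : ℕ} {l : List ℕ} (hm : 1 ≤ m) :
    l ∈ ATl q m ↔ l ∈ Tl q m ∧ ∀ x ∈ l.head?, x < m := by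
  match q with
  | 0 =>
    constructor
    · intro h
      simp only [ATl, Finset.mem_singleton] at h
      subst h
      exact ⟨by simp [Tl], by simp⟩
    · rintro ⟨h, -⟩
      obtain ⟨hlen, -⟩ := mem_Tl.1 h
      rw [List.length_eq_zero_iff] at hlen
      simp [ATl, hlen]
  | q+1 =>
    simp only [ATl, Tl, Finset.mem_union, Finset.mem_image, Finset.mem_biUnion, Finset.mem_range]
    constructor
    · rintro (⟨l', hl', rfl⟩ | ⟨v, hv, l', hl', rfl⟩)
      · exact ⟨Or.inl ⟨l', hl', rfl⟩, by simp; omega⟩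
      · exact ⟨Or.inr ⟨v, by omega, l', hl', rfl⟩, by simp; omega⟩
    · rintro ⟨(⟨l', hl', rfl⟩ | ⟨v, hv, l', hl', rfl⟩), hh⟩
      · exact Or.inl ⟨l', hl', rfl⟩
      · refine Or.inr ⟨v, ?_, l', hl', rfl⟩
        have := hh (v+1) (by simp)
        omega

lemma card_union_cons (s : Finset (List ℕ)) (f : ℕ → Finset (List ℕ)) (b : ℕ) :
    ((s.image (List.cons 0)) ∪
      (Finset.range b).biUnion (fun v => (f (v+1)).image (List.cons (v+1)))).card
    = s.card + ∑ v ∈ Finset.range b, (f (v+1)).card := by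
  rw [Finset.card_union_of_disjoint, Finset.card_image_of_injective _ (List.cons_injective),
    Finset.card_biUnion]
  · congr 1
    exact Finset.sum_congr rfl fun v _ =>
      Finset.card_image_of_injective _ (List.cons_injective)
  · intro v _ w _ hvw
    rw [Function.onFun, Finset.disjoint_left]
    intro l h1 h2
    simp only [Finset.mem_image] at h1 h2
    obtain ⟨l1, -, rfl⟩ := h1
    obtain ⟨l2, -, h⟩ := h2
    simp only [List.cons.injEq] at h
    omega
  · rw [Finset.disjoint_left]
    intro l h1 hl
    simp only [Finset.mem_image] at h1
    obtain ⟨l1, -, rfl⟩ := h1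
    simp only [Finset.mem_biUnion, Finset.mem_image, Finset.mem_range] at hl
    obtain ⟨v, -, l2, -, h⟩ := hl
    simp only [List.cons.injEq] at h
    omega

lemma card_Tl_zero (b : ℕ) : (Tl 0 b).card = 1 := rfl

lemma card_Tl_succ (q b : ℕ) :
    (Tl (q+1) b).card = (Tl q b).card + ∑ v ∈ Finset.range b, (Tl q (v+1)).card :=
  card_union_cons _ _ _

lemma card_ATl_zero (m : ℕ) : (ATl 0 m).card = 1 := rfl

lemma card_ATl_succ (q m : ℕ) (hm : 1 ≤ m) :
    (ATl (q+1) m).card + (Tl q m).card = (Tl (q+1) m).card := by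
  rw [show ATl (q+1) m = ((Tl q m).image (List.cons 0)) ∪
      (Finset.range (m-1)).biUnion (fun v => (Tl q (v+1)).image (List.cons (v+1))) from rfl,
    card_union_cons, card_Tl_succ]
  have : ∑ v ∈ Finset.range m, (Tl q (v+1)).card
      = ∑ v ∈ Finset.range (m-1), (Tl q (v+1)).card + (Tl q m).card := by
    have hm' : m = (m-1) + 1 := by omega
    rw [hm', Finset.sum_range_succ]
    simp [← hm']
  omega

def hd (s : ℕ) : ℕ := ∑ q ∈ Finset.range s, (Tl q (s - q)).card
def Hd (s : ℕ) : ℕ := ∑ q ∈ Finset.range s, ∑ v ∈ Finset.range (s - q), (Tl q (v+1)).card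

lemma hd_succ (s : ℕ) : hd (s+1) = 1 + hd s + Hd s := by
  rw [hd, Finset.sum_range_succ']
  have h1 : ∀ q ∈ Finset.range s, (Tl (q+1) (s+1-(q+1))).card
      = (Tl q (s-q)).card + ∑ v ∈ Finset.range (s-q), (Tl q (v+1)).card := by
    intro q hq
    rw [show s+1-(q+1) = s - q by omega, card_Tl_succ]
  rw [Finset.sum_congr rfl h1, Finset.sum_add_distrib, card_Tl_zero]
  rw [hd, Hd]
  omega

lemma Hd_succ (s : ℕ) : Hd (s+1) = Hd s + hd (s+1) := by
  rw [Hd]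
  have h1 : ∀ q ∈ Finset.range (s+1), ∑ v ∈ Finset.range (s+1-q), (Tl q (v+1)).card
      = (∑ v ∈ Finset.range (s-q), (Tl q (v+1)).card) + (Tl q (s+1-q)).card := by
    intro q hq
    rw [Finset.mem_range] at hq
    rw [show s+1-q = (s-q)+1 by omega, Finset.sum_range_succ]
  rw [Finset.sum_congr rfl h1, Finset.sum_add_distrib, Finset.sum_range_succ]
  simp [Hd, hd]

lemma hd_fib : ∀ s, hd s = Nat.fib (2*s) ∧ Hd s + 1 = Nat.fib (2*s+1) := by
  intro s
  induction s with
  | zero => simp [hd, Hd]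
  | succ s ih =>
    obtain ⟨ih1, ih2⟩ := ih
    have f1 : Nat.fib (2*s+2) = Nat.fib (2*s) + Nat.fib (2*s+1) := by
      rw [Nat.fib_add_two]
    have f2 : Nat.fib (2*s+3) = Nat.fib (2*s+1) + Nat.fib (2*s+2) := by
      rw [Nat.fib_add_two]
    have e1 : hd (s+1) = Nat.fib (2*(s+1)) := by
      rw [hd_succ, show 2*(s+1) = 2*s+2 by omega]
      omega
    refine ⟨e1, ?_⟩
    rw [Hd_succ, e1, show 2*(s+1)+1 = 2*s+3 by omega, show 2*(s+1) = 2*s+2 by omega]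
    omega

lemma g_fib (u : ℕ) :
    ∑ q ∈ Finset.range (u+1), (ATl q (u+1-q)).card = Nat.fib (2*u+1) := by
  have key : (∑ q ∈ Finset.range (u+1), (ATl q (u+1-q)).card) + hd u = hd (u+1) := by
    have hr : hd (u+1) = (∑ q ∈ Finset.range u, (Tl (q+1) (u+1-(q+1))).card) + 1 := by
      rw [hd, Finset.sum_range_succ', card_Tl_zero]
    have hl : (∑ q ∈ Finset.range (u+1), (ATl q (u+1-q)).card)
        = (∑ q ∈ Finset.range u, (ATl (q+1) (u+1-(q+1))).card) + 1 := by
      rw [Finset.sum_range_succ', card_ATl_zero]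
    have h1 : ∀ q ∈ Finset.range u, (ATl (q+1) (u+1-(q+1))).card + (Tl q (u - q)).card
        = (Tl (q+1) (u+1-(q+1))).card := by
      intro q hq
      rw [Finset.mem_range] at hq
      rw [show u+1-(q+1) = u - q by omega]
      exact card_ATl_succ q (u-q) (by omega)
    have hsum : (∑ q ∈ Finset.range u, (ATl (q+1) (u+1-(q+1))).card)
        + ∑ q ∈ Finset.range u, (Tl q (u-q)).card
        = ∑ q ∈ Finset.range u, (Tl (q+1) (u+1-(q+1))).card := by
      rw [← Finset.sum_add_distrib]
      exact Finset.sum_congr rfl h1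
    rw [hr, hl, hd]
    omega
  have h1 := (hd_fib u).1
  have h2 := (hd_fib (u+1)).1
  rw [show 2*(u+1) = 2*u+2 by omega] at h2
  have f1 : Nat.fib (2*u+2) = Nat.fib (2*u) + Nat.fib (2*u+1) := by rw [Nat.fib_add_two]
  omega

/-- Decoder: from `(p, j, l)` build the inversion sequence. -/
def dec (t : ℕ) (x : ℕ × ℕ × List ℕ) : ℕ → ℕ := fun i =>
  if i ≤ x.2.1 then 0 else if i ≤ x.1 then x.1 - t - 1 else x.2.2.getD (i - x.1 - 1) 0

def Param (n t : ℕ) : Finset (ℕ × ℕ × List ℕ) :=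
  (Finset.Icc (t+2) n).biUnion fun p =>
    ((Finset.Icc (p-t-1) (p-1)) ×ˢ ATl (n-p) (p-t-1)).image fun y => (p, y.1, y.2)

lemma mem_Param {n t : ℕ} {p j : ℕ} {l : List ℕ} :
    (p, j, l) ∈ Param n t ↔
      (t+2 ≤ p ∧ p ≤ n) ∧ (p-t-1 ≤ j ∧ j ≤ p-1) ∧ l ∈ ATl (n-p) (p-t-1) := by
  simp only [Param, Finset.mem_biUnion, Finset.mem_Icc, Finset.mem_image, Finset.mem_product,
    Prod.mk.injEq]
  constructor
  · rintro ⟨p', hp', ⟨j', l'⟩, ⟨hj', hl'⟩, rfl, rfl, rfl⟩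
    exact ⟨hp', hj', hl'⟩
  · rintro ⟨hp, hj, hl⟩
    exact ⟨p, hp, ⟨j, l⟩, ⟨hj, hl⟩, rfl, rfl, rfl⟩

lemma card_Param {n t : ℕ} (hn : t + 2 ≤ n) :
    (Param n t).card = (t+1) * Nat.fib (2*n - 2*t - 3) := by
  rw [Param, Finset.card_biUnion]
  · have h1 : ∀ p ∈ Finset.Icc (t+2) n,
        (((Finset.Icc (p-t-1) (p-1)) ×ˢ ATl (n-p) (p-t-1)).image
          fun y : ℕ × List ℕ => (p, y.1, y.2)).card
        = (t+1) * (ATl (n-p) (p-t-1)).card := by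
      intro p hp
      rw [Finset.mem_Icc] at hp
      rw [Finset.card_image_of_injective, Finset.card_product, Nat.card_Icc]
      · congr 1
        omega
      · intro y z h
        simpa [Prod.ext_iff] using h
    rw [Finset.sum_congr rfl h1, ← Finset.mul_sum]
    congr 1
    -- reindex p = n - q
    have hu : n - t - 1 = (n - t - 2) + 1 := by omega
    rw [show 2*n - 2*t - 3 = 2*(n-t-2)+1 by omega, ← g_fib (n-t-2)]
    apply Finset.sum_nbij' (i := fun p => n - p) (j := fun q => n - q)
    · intro p hp
      rw [Finset.mem_Icc] at hp
      rw [Finset.mem_range]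
      omega
    · intro q hq
      rw [Finset.mem_range] at hq
      rw [Finset.mem_Icc]
      omega
    · intro p hp
      rw [Finset.mem_Icc] at hp
      omega
    · intro q hq
      rw [Finset.mem_range] at hq
      omega
    · intro p hp
      rw [Finset.mem_Icc] at hp
      rw [show n - t - 2 + 1 - (n - p) = p - t - 1 by omega]
  · intro p hp p' hp' hne
    rw [Function.onFun, Finset.disjoint_left]
    intro x h1 h2
    simp only [Finset.mem_image] at h1 h2
    obtain ⟨y, -, rfl⟩ := h1
    obtain ⟨z, -, h⟩ := h2
    simp only [Prod.ext_iff] at h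
    exact hne h.1.symm
section Struct

variable {n t : ℕ}

lemma dec_facts {p j : ℕ} {l : List ℕ} (hx : (p, j, l) ∈ Param n t) :
    PrMax n (dec t (p, j, l)) p ∧
    IsInvSeq n (dec t (p, j, l)) ∧
    ¬ Contains n Pat102 (dec t (p, j, l)) ∧ ¬ Contains n Pat012 (dec t (p, j, l)) ∧
    HasRank n (dec t (p, j, l)) t := by
  rw [mem_Param] at hx
  obtain ⟨⟨hp1, hp2⟩, ⟨hj1, hj2⟩, hl⟩ := hx
  set m := p - t - 1 with hm_def
  have hm : 1 ≤ m := by omega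
  rw [mem_ATl hm] at hl
  obtain ⟨hlT, hhead⟩ := hl
  rw [mem_Tl] at hlT
  obtain ⟨hlen, hb, hpw⟩ := hlT
  set e := dec t (p, j, l) with he_def
  have hjp : j < p := by omega
  -- value lemmas
  have ez : ∀ i, i ≤ j → e i = 0 := by
    intro i hi
    simp only [he_def, dec, if_pos hi]
  have em : ∀ i, j < i → i ≤ p → e i = m := by
    intro i h1 h2
    simp only [he_def, dec, if_neg (by omega : ¬ i ≤ j), if_pos h2]; exact hm_def.symm
  have etail : ∀ i, p < i → e i = l.getD (i - p - 1) 0 := by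
    intro i h1
    simp only [he_def, dec, if_neg (by omega : ¬ i ≤ j), if_neg (by omega : ¬ i ≤ p)]
  have etail' : ∀ i, p < i → i ≤ n → ∀ (h : i - p - 1 < l.length), e i = l[i - p - 1] := by
    intro i h1 h2 h
    rw [etail i h1, List.getD_eq_getElem l 0 h]
  -- all values at most m
  have hV : ∀ i, e i ≤ m := by
    intro i
    rcases le_or_gt i j with h | h
    · rw [ez i h]; omega
    · rcases le_or_gt i p with h2 | h2
      · rw [em i h h2]
      · rw [etail i h2]
        rcases lt_or_ge (i - p - 1) l.length with h3 | h3
        · rw [List.getD_eq_getElem l 0 h3]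
          exact hb _ (List.getElem_mem h3)
        · rw [List.getD_eq_default l 0 h3]; omega
  -- prefix values are 0 or m
  have hP : ∀ i, i ≤ p → e i = 0 ∨ e i = m := by
    intro i hi
    rcases le_or_gt i j with h | h
    · exact Or.inl (ez i h)
    · exact Or.inr (em i h hi)
  -- tail pairwise
  have hT : ∀ i k, p < i → i < k → k ≤ n → e k ≤ e i ∨ e i = 0 := by
    intro i k h1 h2 h3
    have hi : i - p - 1 < l.length := by omega
    have hk : k - p - 1 < l.length := by omega
    rw [etail' i h1 (by omega) hi, etail' k (by omega) h3 hk]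
    have := (List.pairwise_iff_getElem.1 hpw) (i - p - 1) (k - p - 1) hi hk (by omega)
    exact this
  have hprmax : PrMax n e p := by
    refine ⟨by omega, hp2, ?_, ?_⟩
    · intro i h1 h2
      rcases le_or_gt (i+1) j with h | h
      · rw [ez i (by omega), ez (i+1) h]
      · rcases le_or_gt i j with h' | h'
        · rw [ez i h', em (i+1) h (by omega)]; omega
        · rw [em i h' (by omega), em (i+1) h (by omega)]
    · rcases eq_or_lt_of_le hp2 with h | h
      · exact Or.inl h
      · refine Or.inr ?_
        rw [em p hjp le_rfl, etail (p+1) (by omega)]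
        have h0 : 0 < l.length := by omega
        rw [show p+1-p-1 = 0 by omega, List.getD_eq_getElem l 0 h0]
        have := hhead l[0] ?_
        · exact this
        · match l, h0 with
          | a :: l', _ => rfl
  refine ⟨hprmax, ⟨?_, ?_, ?_⟩, ?_, ?_, ⟨p, hprmax, ?_⟩⟩
  · exact ez 0 (by omega)
  · intro i h1 h2
    rcases le_or_gt i j with h | h
    · rw [ez i h]; omega
    · rcases le_or_gt i p with h' | h'
      · rw [em i h h']; omega
      · have := hV i; omega
  · intro i hi
    rw [etail i (by omega)]
    exact List.getD_eq_default l 0 (by omega)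
  · rintro ⟨i, jj, k, h1, h2, h3, h4, hba, hac⟩
    have hkm : e k ≤ m := hV k
    have h1m : 1 ≤ e i := by omega
    have him : e i < m := by omega
    rcases le_or_gt i p with hip | hip
    · rcases hP i hip with h | h <;> omega
    · rcases hT i k hip (by omega) h4 with h | h <;> omega
  · rintro ⟨i, jj, k, h1, h2, h3, h4, hab, hbc⟩
    have hkm : e k ≤ m := hV k
    have h1m : 1 ≤ e jj := by omega
    have hjm : e jj < m := by omega
    rcases le_or_gt jj p with hip | hip
    · rcases hP jj hip with h | h <;> omega
    · rcases hT jj k hip h3 h4 with h | h <;> omega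
  · rw [em p hjp le_rfl]
    omega

lemma prmax_unique {e : ℕ → ℕ} {p p' : ℕ} (h : PrMax n e p) (h' : PrMax n e p') : p = p' := by
  obtain ⟨h1, h2, h3, h4⟩ := h
  obtain ⟨h1', h2', h3', h4'⟩ := h'
  by_contra hne
  rcases lt_or_gt_of_ne hne with hlt | hlt
  · have hd : e (p + 1) < e p := by
      rcases h4 with rfl | h4
      · omega
      · exact h4
    have := h3' p h1 hlt
    omega
  · have hd : e (p' + 1) < e p' := by
      rcases h4' with rfl | h4'
      · omega
      · exact h4'
    have := h3 p' h1' hlt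
    omega

lemma dec_injOn (hn : 2 ≤ n) (ht : t ≤ n - 2) :
    Set.InjOn (dec t) (Param n t : Set (ℕ × ℕ × List ℕ)) := by
  rintro ⟨p, j, l⟩ hx ⟨p', j', l'⟩ hy heq
  rw [Finset.mem_coe] at hx hy
  have hfx := dec_facts hx
  have hfy := dec_facts hy
  rw [mem_Param] at hx hy
  obtain ⟨⟨hp1, hp2⟩, ⟨hj1, hj2⟩, hl⟩ := hx
  obtain ⟨⟨hp1', hp2'⟩, ⟨hj1', hj2'⟩, hl'⟩ := hy
  have hpp : p = p' := prmax_unique hfx.1 (heq ▸ hfy.1)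
  subst hpp
  have hm : 1 ≤ p - t - 1 := by omega
  rw [mem_ATl hm, mem_Tl] at hl hl'
  obtain ⟨⟨hlen, hb, hpw⟩, hhead⟩ := hl
  obtain ⟨⟨hlen', hb', hpw'⟩, hhead'⟩ := hl'
  have hjj : j = j' := by
    by_contra hne
    rcases lt_or_gt_of_ne hne with hlt | hlt
    · have h1 : dec t (p, j, l) (j+1) = p - t - 1 := by
        simp only [dec, if_neg (by omega : ¬ j+1 ≤ j), if_pos (by omega : j+1 ≤ p)]
      have h2 : dec t (p, j', l') (j+1) = 0 := by
        simp only [dec, if_pos (by omega : j+1 ≤ j')]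
      rw [heq] at h1
      omega
    · have h1 : dec t (p, j, l) (j'+1) = 0 := by
        simp only [dec, if_pos (by omega : j'+1 ≤ j)]
      have h2 : dec t (p, j', l') (j'+1) = p - t - 1 := by
        simp only [dec, if_neg (by omega : ¬ j'+1 ≤ j'), if_pos (by omega : j'+1 ≤ p)]
      rw [heq] at h1
      omega
  subst hjj
  have hll : l = l' := by
    apply List.ext_getElem (by omega)
    intro d hd1 hd2
    have h1 : dec t (p, j, l) (p+1+d) = l[d] := by
      simp only [dec, if_neg (by omega : ¬ p+1+d ≤ j), if_neg (by omega : ¬ p+1+d ≤ p)]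
      rw [show p+1+d-p-1 = d by omega, List.getD_eq_getElem l 0 hd1]
    have h2 : dec t (p, j, l') (p+1+d) = l'[d] := by
      simp only [dec, if_neg (by omega : ¬ p+1+d ≤ j), if_neg (by omega : ¬ p+1+d ≤ p)]
      rw [show p+1+d-p-1 = d by omega, List.getD_eq_getElem l' 0 hd2]
    rw [heq] at h1
    rw [h1] at h2
    exact h2
  rw [hll]

end Struct
lemma encode (n t : ℕ) (hn : 2 ≤ n) (ht : t ≤ n - 2) (e : ℕ → ℕ)
    (he : IsInvSeq n e ∧ ¬ Contains n Pat102 e ∧ ¬ Contains n Pat012 e ∧ HasRank n e t) :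
    ∃ x ∈ Param n t, dec t x = e := by
  obtain ⟨⟨he0, hlt, hout⟩, h102, h012, p, ⟨hp1, hpn, hmono, hdesc⟩, hrank⟩ := he
  set m := e p with hm_def
  -- monotone on [1, p]
  have hmono' : ∀ i k, 1 ≤ i → i ≤ k → k ≤ p → e i ≤ e k := by
    have key : ∀ d i, 1 ≤ i → i + d ≤ p → e i ≤ e (i + d) := by
      intro d
      induction d with
      | zero => intro i _ _; simp
      | succ d ih =>
        intro i h1 h2
        calc e i ≤ e (i + d) := ih i h1 (by omega)
          _ ≤ e (i + d + 1) := hmono (i+d) (by omega) (by omega)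
    intro i k h1 h2 h3
    have := key (k - i) i h1 (by omega)
    rwa [show i + (k - i) = k by omega] at this
  have e1 : e 1 = 0 := by
    have := hlt 1 le_rfl (by omega)
    omega
  have hm1 : 1 ≤ m := by
    by_contra hm0
    have hm0' : e p = 0 := by omega
    rcases hdesc with rfl | hd
    · omega
    · omega
  have hjn : 1 ≤ p := hp1
  set j := Nat.findGreatest (fun i => e i = 0) p with hj_def
  have hj_spec : e j = 0 := Nat.findGreatest_spec (P := fun i => e i = 0) hp1 e1
  have hj1' : 1 ≤ j := Nat.le_findGreatest hp1 e1
  have hjle : j ≤ p := Nat.findGreatest_le p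
  have hgreat : ∀ i, j < i → i ≤ p → e i ≠ 0 := fun i h1 h2 =>
    Nat.findGreatest_is_greatest (P := fun i => e i = 0) (n := p) h1 h2
  have hjp : j < p := by
    rcases eq_or_lt_of_le hjle with h | h
    · rw [h] at hj_spec; omega
    · exact h
  have h1p : 1 < p := by omega
  have hjm : e (j+1) = m := by
    have hne : e (j+1) ≠ 0 := hgreat _ (by omega) (by omega)
    have hle : e (j+1) ≤ e p := hmono' (j+1) p (by omega) (by omega) le_rfl
    by_contra hne2
    have hlt2 : e (j+1) < m := by omega
    have hj1p : j + 1 < p := by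
      rcases eq_or_lt_of_le (show j + 1 ≤ p by omega) with h | h
      · rw [h] at hlt2; omega
      · exact h
    exact h012 ⟨1, j+1, p, le_rfl, by omega, hj1p, hpn, by rw [e1]; omega, hlt2⟩
  have hprefix0 : ∀ i, 1 ≤ i → i ≤ j → e i = 0 := by
    intro i h1 h2
    have := hmono' i j h1 h2 hjle
    omega
  have hprefixm : ∀ i, j < i → i ≤ p → e i = m := by
    intro i h1 h2
    have ha := hmono' (j+1) i (by omega) (by omega) h2
    have hb := hmono' i p (by omega) h2 le_rfl
    omega
  have hmj : m ≤ j := by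
    have := hlt (j+1) (by omega) (by omega)
    omega
  have htaille : ∀ k, p < k → k ≤ n → e k ≤ m := by
    intro k h1 h2
    by_contra hc
    exact h012 ⟨1, p, k, le_rfl, h1p, h1, h2, by rw [e1]; omega, by omega⟩
  have htailpw : ∀ i k, p < i → i < k → k ≤ n → e k ≤ e i ∨ e i = 0 := by
    intro i k h1 h2 h3
    by_contra hc
    push_neg at hc
    exact h012 ⟨1, i, k, le_rfl, by omega, h2, h3, by rw [e1]; omega, hc.1⟩
  have hrank' : p = m + t + 1 := hrank
  set l : List ℕ := (List.range (n - p)).map (fun d => e (p+1+d)) with hl_def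
  have hlget : ∀ (d : ℕ) (h : d < l.length), l[d] = e (p+1+d) := by
    intro d h
    simp [hl_def]
  have hllen : l.length = n - p := by simp [hl_def]
  have hmem : (p, j, l) ∈ Param n t := by
    rw [mem_Param]
    refine ⟨⟨by omega, hpn⟩, ⟨by omega, by omega⟩, ?_⟩
    rw [mem_ATl (by omega), mem_Tl]
    refine ⟨⟨hllen, ?_, ?_⟩, ?_⟩
    · intro x hx
      simp only [hl_def, List.mem_map, List.mem_range] at hx
      obtain ⟨d, hd, rfl⟩ := hx
      have := htaille (p+1+d) (by omega) (by omega)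
      omega
    · rw [List.pairwise_iff_getElem]
      intro a b ha hb hab
      rw [hlget a ha, hlget b hb]
      rw [hllen] at ha hb
      exact htailpw (p+1+a) (p+1+b) (by omega) (by omega) (by omega)
    · rcases Nat.eq_zero_or_pos (n - p) with hq | hq
      · intro x hx
        rw [show l = [] by rw [← List.length_eq_zero_iff, hllen, hq]] at hx
        simp at hx
      · intro x hx
        have h0 : 0 < l.length := by omega
        have hne : l ≠ [] := by
          intro hnil
          rw [hnil] at h0
          simp at h0
        obtain ⟨a, l', hcons⟩ := List.exists_cons_of_ne_nil hne
        have hxa : x = a := by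
          rw [hcons] at hx
          have := hx; simp at this; omega
        have ha : a = e (p+1) := by
          have h1 := hlget 0 h0
          rw [show (p+1+0) = p+1 from rfl] at h1
          rw [← h1]
          simp [hcons]
        have hdesc' : e (p+1) < m := by
          rcases hdesc with h | h
          · omega
          · exact h
        omega
  refine ⟨(p, j, l), hmem, ?_⟩
  funext i
  rcases le_or_gt i j with h | h
  · simp only [dec, if_pos h]
    rcases Nat.eq_zero_or_pos i with rfl | h1
    · exact he0.symm
    · exact (hprefix0 i h1 h).symm
  · rcases le_or_gt i p with h2 | h2
    · simp only [dec, if_neg (by omega : ¬ i ≤ j), if_pos h2]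
      rw [hprefixm i h h2]
      omega
    · simp only [dec, if_neg (by omega : ¬ i ≤ j), if_neg (by omega : ¬ i ≤ p)]
      rcases le_or_gt i n with h3 | h3
      · have hd : i - p - 1 < l.length := by omega
        rw [List.getD_eq_getElem l 0 hd, hlget _ hd, show p+1+(i-p-1) = i by omega]
      · rw [List.getD_eq_default l 0 (by omega), hout i h3]

theorem stmt4 (n t : ℕ) (hn : 2 ≤ n) (ht : t ≤ n - 2) :
    {e : ℕ → ℕ | IsInvSeq n e ∧ ¬ Contains n Pat102 e ∧ ¬ Contains n Pat012 e ∧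
      HasRank n e t}.ncard = (t + 1) * Nat.fib (2 * n - 2 * t - 3) := by
  have hS : {e : ℕ → ℕ | IsInvSeq n e ∧ ¬ Contains n Pat102 e ∧ ¬ Contains n Pat012 e ∧
      HasRank n e t} = dec t '' (Param n t : Set (ℕ × ℕ × List ℕ)) := by
    ext e
    constructor
    · intro he
      obtain ⟨x, hx, hxe⟩ := encode n t hn ht e he
      exact ⟨x, hx, hxe⟩
    · rintro ⟨⟨p, j, l⟩, hx, rfl⟩
      have h := dec_facts (Finset.mem_coe.1 hx)
      exact ⟨h.2.1, h.2.2.1, h.2.2.2.1, h.2.2.2.2⟩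
  rw [hS, Set.ncard_image_of_injOn (dec_injOn hn ht), Set.ncard_coe_finset,
    card_Param (by omega)]
end

section
/- An inversion sequence e of length n avoids both 102 and 012 if and only if there exist m ≥ 0, indices m < i_1 ≤ i_2 ≤ ... ≤ i_ℓ (these being exactly the positions of the nonzero entries) such that m = e_{i_1} ≥ e_{i_2} ≥ ... ≥ e_{i_ℓ} ≥ 1 where m = max(e), and e_j = 0 for all other indices j. -/
theorem stmt5 (n : ℕ) (e : ℕ → ℕ) (he : IsInvSeq n e) :
    (¬ Contains n Pat102 e ∧ ¬ Contains n Pat012 e) ↔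
      ∃ m, (∀ i, 1 ≤ i → i ≤ n → e i ≤ m) ∧
        (∀ i j, 1 ≤ i → i < j → j ≤ n → e i ≠ 0 → e j ≠ 0 → e j ≤ e i) ∧
        (∀ i, 1 ≤ i → i ≤ n → e i ≠ 0 → m < i) ∧
        (∀ i, 1 ≤ i → i ≤ n → e i ≠ 0 → (∀ j, 1 ≤ j → j < i → e j = 0) → e i = m) := by
  obtain ⟨h0, hltn, hout⟩ := he
  constructor
  · rintro ⟨h102, h012⟩
    have hdec : ∀ i j, 1 ≤ i → i < j → j ≤ n → e i ≠ 0 → e j ≠ 0 → e j ≤ e i := by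
      intro i j hi hij hjn hei hej
      by_contra hc
      push_neg at hc
      have hn1 : 1 ≤ n := le_trans (le_trans hi hij.le) hjn
      have h1 : e 1 = 0 := Nat.lt_one_iff.mp (hltn 1 le_rfl hn1)
      have hi2 : 1 < i := by
        rcases Nat.lt_or_ge 1 i with h | h
        · exact h
        · have heq : i = 1 := le_antisymm h hi
          rw [heq] at hei
          exact absurd h1 hei
      exact h012 ⟨1, i, j, le_rfl, hi2, hij, hjn,
        ⟨by rw [h1]; exact Nat.pos_of_ne_zero hei, hc⟩⟩
    by_cases hex : ∃ i, 1 ≤ i ∧ i ≤ n ∧ e i ≠ 0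
    · classical
      set i0 := Nat.find hex with hi0def
      obtain ⟨hi01, hi0n, hi0ne⟩ := Nat.find_spec hex
      have hmin : ∀ j, 1 ≤ j → j ≤ n → e j ≠ 0 → i0 ≤ j := by
        intro j h1 h2 h3
        by_contra hc
        push_neg at hc
        exact Nat.find_min hex hc ⟨h1, h2, h3⟩
      refine ⟨e i0, ?_, hdec, ?_, ?_⟩
      · intro i hi hin
        by_cases hz : e i = 0
        · simp [hz]
        · have := hmin i hi hin hz
          rcases eq_or_lt_of_le this with h | h
          · rw [← h]
          · exact hdec i0 i hi01 h hin hi0ne hz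
      · intro i hi hin hne
        have h1 := hmin i hi hin hne
        have h2 := hltn i0 hi01 hi0n
        omega
      · intro i hi hin hne hall
        have h1 := hmin i hi hin hne
        rcases eq_or_lt_of_le h1 with h | h
        · rw [h]
        · exact absurd (hall i0 hi01 h) hi0ne
    · push_neg at hex
      refine ⟨0, ?_, hdec, ?_, ?_⟩
      · intro i hi hin; exact le_of_eq (hex i hi hin)
      · intro i hi hin hne; exact absurd (hex i hi hin) hne
      · intro i hi hin hne; exact absurd (hex i hi hin) hne
  · rintro ⟨m, hub, hdec, h3, h4⟩
    constructor
    · rintro ⟨i, j, k, hi, hij, hjk, hkn, hb, hc⟩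
      have hei : e i ≠ 0 := by omega
      have hek : e k ≠ 0 := by omega
      have := hdec i k hi (hij.trans hjk) hkn hei hek
      omega
    · rintro ⟨i, j, k, hi, hij, hjk, hkn, hb, hc⟩
      have hej : e j ≠ 0 := by omega
      have hek : e k ≠ 0 := by omega
      have := hdec j k (by omega) hjk hkn hej hek
      omega
end

section
/- For positive integers k ≤ n, the number of Dyck paths of semilength n that end with the subpath u d^k (one up step followed by exactly k down steps, i.e., the last k steps are down and the step before them is up with the path not having a (k+1)-th trailing down step) equals (k/n) · C(2n-k-1, n-1). -/
/-- Number of up steps (`true`) in a list of steps. -/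
def upCount (L : List Bool) : ℕ := (L.filter id).length

/-- A Dyck path of semilength `n`: `2n` steps (`true` = up, `false` = down),
`n` up steps, every prefix has at least as many ups as downs. -/
def IsDyck (n : ℕ) (L : List Bool) : Prop :=
  L.length = 2 * n ∧ upCount L = n ∧ ∀ k, k ≤ L.length → k ≤ 2 * upCount (L.take k)

def Bal (L : List Bool) : Prop := ∀ k, k ≤ L.length → k ≤ 2 * upCount (L.take k)

def P (m j : ℕ) : Set (List Bool) := {L | L.length = m ∧ upCount L = j ∧ Bal L}

lemma upCount_append (L M : List Bool) : upCount (L ++ M) = upCount L + upCount M := by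
  simp [upCount, List.filter_append]

lemma upCount_le (L : List Bool) : upCount L ≤ L.length := List.length_filter_le _ _

lemma bal_concat (L : List Bool) (b : Bool) :
    Bal (L ++ [b]) ↔ Bal L ∧ L.length + 1 ≤ 2 * upCount (L ++ [b]) := by
  constructor
  · intro h
    refine ⟨fun i hi => ?_, ?_⟩
    · have := h i (by simp; omega)
      rwa [List.take_append_of_le_length hi] at this
    · have := h (L.length + 1) (by simp)
      rwa [List.take_of_length_le (by simp)] at this
  · rintro ⟨h1, h2⟩ i hi
    rcases le_or_gt i L.length with h | h
    · rw [List.take_append_of_le_length h]; exact h1 i h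
    · have hil : i = L.length + 1 := by simp at hi; omega
      subst hil
      rw [List.take_of_length_le (by simp)]; exact h2

lemma bal_len {L : List Bool} (h : Bal L) : L.length ≤ 2 * upCount L := by
  have := h L.length le_rfl
  rwa [List.take_length] at this

lemma Pfin (m j : ℕ) : (P m j).Finite :=
  (List.finite_length_eq Bool m).subset (fun L hL => hL.1)

lemma Pdecomp (m i : ℕ) (hm : m + 1 ≤ 2 * (i + 1)) :
    P (m + 1) (i + 1) = ((· ++ [true]) '' P m i) ∪ ((· ++ [false]) '' P m (i + 1)) := by
  ext L
  constructor
  · rintro ⟨hl, hu, hb⟩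
    rcases L.eq_nil_or_concat' with rfl | ⟨L', b, rfl⟩
    · simp at hl
    · have hb' := (bal_concat L' b).mp hb
      have hlen : L'.length = m := by simpa using hl
      have hcnt : upCount L' + upCount [b] = i + 1 := by rw [← upCount_append]; exact hu
      cases b
      · have e : upCount [false] = 0 := rfl
        right; exact ⟨L', ⟨hlen, by omega, hb'.1⟩, rfl⟩
      · have e : upCount [true] = 1 := rfl
        left; exact ⟨L', ⟨hlen, by omega, hb'.1⟩, rfl⟩
  · rintro (⟨L', ⟨hl, hu, hb⟩, rfl⟩ | ⟨L', ⟨hl, hu, hb⟩, rfl⟩)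
    · have hc : upCount (L' ++ [true]) = i + 1 := by
        rw [upCount_append, hu]; simp [upCount]
      exact ⟨by simp [hl], hc, (bal_concat _ _).mpr ⟨hb, by rw [hc, hl]; exact hm⟩⟩
    · have hc : upCount (L' ++ [false]) = i + 1 := by
        rw [upCount_append, hu]; simp [upCount]
      exact ⟨by simp [hl], hc, (bal_concat _ _).mpr ⟨hb, by rw [hc, hl]; exact hm⟩⟩

lemma Pcard : ∀ m j : ℕ, m ≤ 2 * j →
    (P m j).ncard + Nat.choose m (j + 1) = Nat.choose m j := by
  intro m
  induction m with
  | zero =>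
    intro j _
    rcases Nat.eq_zero_or_pos j with rfl | hj
    · have : P 0 0 = {([] : List Bool)} := by
        ext L
        constructor
        · rintro ⟨hl, _, _⟩; simpa using List.length_eq_zero_iff.mp hl
        · rintro rfl; exact ⟨rfl, rfl, fun k hk => by simp at hk; simp [hk]⟩
      rw [this]; simp
    · have : P 0 j = ∅ := by
        ext L; simp only [Set.mem_empty_iff_false, iff_false]
        rintro ⟨hl, hu, _⟩
        have := List.length_eq_zero_iff.mp hl
        subst this; simp [upCount] at hu; omega
      rw [this, Set.ncard_empty, Nat.choose_eq_zero_of_lt (show 0 < j + 1 by omega),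
        Nat.choose_eq_zero_of_lt hj]
  | succ m IH =>
    intro j hm
    obtain ⟨i, rfl⟩ : ∃ i, j = i + 1 := ⟨j - 1, by omega⟩
    have hinj : ∀ b : Bool, Function.Injective (· ++ [b] : List Bool → List Bool) :=
      fun b => List.append_left_injective [b]
    have hdisj : Disjoint ((· ++ [true]) '' P m i) ((· ++ [false]) '' P m (i + 1)) := by
      rw [Set.disjoint_left]
      rintro L ⟨A, _, rfl⟩ ⟨B, _, hB⟩
      have := congrArg List.getLast? hB
      simp at this
    have hcard : (P (m + 1) (i + 1)).ncard = (P m i).ncard + (P m (i + 1)).ncard := by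
      rw [Pdecomp m i hm, Set.ncard_union_eq hdisj ((Pfin m i).image _) ((Pfin m (i+1)).image _),
        Set.ncard_image_of_injective _ (hinj true), Set.ncard_image_of_injective _ (hinj false)]
    rcases le_or_gt m (2 * i) with hcase | hcase
    · have h1 := IH i hcase
      have h2 := IH (i + 1) (by omega)
      have p1 : Nat.choose (m + 1) (i + 1) = Nat.choose m i + Nat.choose m (i + 1) :=
        Nat.choose_succ_succ m i
      have p2 : Nat.choose (m + 1) (i + 2) = Nat.choose m (i + 1) + Nat.choose m (i + 2) :=
        Nat.choose_succ_succ m (i + 1)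
      have e : i + 1 + 1 = i + 2 := rfl
      rw [e] at h2 ⊢
      omega
    · -- m = 2i + 1
      have hmeq : m = 2 * i + 1 := by omega
      have hempty : P m i = ∅ := by
        ext L; simp only [Set.mem_empty_iff_false, iff_false]
        rintro ⟨hl, hu, hb⟩
        have := bal_len hb
        omega
      have h2 := IH (i + 1) (by omega)
      have p1 : Nat.choose (m + 1) (i + 1) = Nat.choose m i + Nat.choose m (i + 1) :=
        Nat.choose_succ_succ m i
      have p2 : Nat.choose (m + 1) (i + 2) = Nat.choose m (i + 1) + Nat.choose m (i + 2) :=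
        Nat.choose_succ_succ m (i + 1)
      have hsym : Nat.choose m (i + 1) = Nat.choose m i := by
        rw [hmeq]; exact Nat.choose_symm_half i
      rw [hempty] at hcard
      simp at hcard
      have e : i + 1 + 1 = i + 2 := rfl
      rw [e] at h2 ⊢
      omega

theorem stmt6 (n k : ℕ) (hk : 1 ≤ k) (hkn : k ≤ n) :
    n * {L : List Bool | IsDyck n L ∧
        ∃ M, L = M ++ true :: List.replicate k false}.ncard =
      k * Nat.choose (2 * n - k - 1) (n - 1) := by
  set m := 2 * n - k - 1 with hmdef
  have hn : 1 ≤ n := le_trans hk hkn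
  have hmm : m + (k + 1) = 2 * n := by omega
  have upT : upCount (true :: List.replicate k false) = 1 := by
    simp [upCount, List.filter_replicate]
  have hset : {L : List Bool | IsDyck n L ∧ ∃ M, L = M ++ true :: List.replicate k false}
      = (· ++ true :: List.replicate k false) '' P m (n - 1) := by
    ext L
    constructor
    · rintro ⟨⟨hl, hu, hb⟩, M, rfl⟩
      refine ⟨M, ⟨?_, ?_, ?_⟩, rfl⟩
      · have : M.length + (k + 1) = 2 * n := by simpa using hl
        omega
      · have : upCount M + 1 = n := by rw [← upT, ← upCount_append]; exact hu
        omega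
      · intro i hi
        have := hb i (by simp; omega)
        rwa [List.take_append_of_le_length hi] at this
    · rintro ⟨M, ⟨hl, hu, hb⟩, rfl⟩
      have hlen : (M ++ true :: List.replicate k false).length = 2 * n := by
        simp [hl]; omega
      have hcnt : upCount (M ++ true :: List.replicate k false) = n := by
        rw [upCount_append, upT, hu]; omega
      refine ⟨⟨hlen, hcnt, ?_⟩, M, rfl⟩
      intro i hi
      rcases le_or_gt i M.length with h | h
      · rw [List.take_append_of_le_length h]
        exact hb i h
      · -- i > M.length : prefix contains all of M plus the true and some falses
        have htk : upCount ((M ++ true :: List.replicate k false).take i) = n := by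
          have : (M ++ true :: List.replicate k false).take i
              = M ++ (true :: List.replicate k false).take (i - M.length) := by
            rw [List.take_append, List.take_of_length_le (by omega)]
          rw [this, upCount_append, hu]
          have : (true :: List.replicate k false).take (i - M.length)
              = true :: List.replicate (min (i - M.length - 1) k) false := by
            obtain ⟨r, hr⟩ : ∃ r, i - M.length = r + 1 := ⟨i - M.length - 1, by omega⟩
            rw [hr]
            simp [List.take_replicate]
          rw [this]
          simp [upCount, List.filter_replicate]
          omega
        rw [htk]
        rw [hlen] at hi
        omega
  have hinj : Function.Injective (· ++ true :: List.replicate k false : List Bool → List Bool) :=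
    List.append_left_injective _
  have hkey := Pcard m (n - 1) (by omega)
  have hsub : n - 1 + 1 = n := by omega
  rw [hsub] at hkey
  rw [hset, Set.ncard_image_of_injective _ hinj]
  have hrec : Nat.choose m n * n = Nat.choose m (n - 1) * (m - (n - 1)) := by
    conv_lhs => rw [← hsub]
    exact Nat.choose_succ_right_eq m (n - 1)
  have hmn : m - (n - 1) = n - k := by omega
  rw [hmn] at hrec
  -- n * ncard + n * C(m,n) = n * C(m,n-1)
  have h1 : n * (P m (n - 1)).ncard + n * Nat.choose m n = n * Nat.choose m (n - 1) := by
    rw [← Nat.mul_add, hkey]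
  have h2 : n * Nat.choose m n = (n - k) * Nat.choose m (n - 1) := by
    rw [Nat.mul_comm, hrec, Nat.mul_comm]
  have h3 : n * Nat.choose m (n - 1)
      = (n - k) * Nat.choose m (n - 1) + k * Nat.choose m (n - 1) := by
    rw [← Nat.add_mul]
    congr 1
    omega
  omega
end

section
/- For integers n ≥ 2 and 1 ≤ t ≤ n-1, let A_{n,t} denote the set of inversion sequences e of length n avoiding 102 and 120 with rank t such that e_{max(e)+t} < max(e). Then |A_{n+1,t}| = Σ_{i=t-1}^{n-2} |A_{n,i}|. -/
/-- The set $A_{n,t}$ of (102,120)-avoiding inversion sequences of length n with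
rank t such that the entry at position max(e)+t is less than max(e). -/
def Aset (n t : ℕ) : Set (ℕ → ℕ) :=
  {e | IsInvSeq n e ∧ ¬ Contains n Pat102 e ∧ ¬ Contains n Pat120 e ∧
    HasRank n e t ∧ ∃ m, IsMaxVal n e m ∧ e (m + t) < m}

/-! ### Characterization -/

structure CharD (n t m : ℕ) (e : ℕ → ℕ) : Prop where
  hm : 1 ≤ m
  hn : m + t + 1 ≤ n
  h0 : e 0 = 0
  hbig : ∀ i, n < i → e i = 0
  hstair : ∀ i, 1 ≤ i → i ≤ m + t + 1 → e i < i
  hmono : ∀ i j, 1 ≤ i → i ≤ j → j ≤ m + t + 1 → e i ≤ e j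
  hP : e (m + t + 1) = m
  hprev : e (m + t) < m
  htaillo : ∀ i, m + t + 1 < i → i ≤ n → e (m + t) ≤ e i
  htailhi : ∀ i, m + t + 1 < i → i ≤ n → e i ≤ m
  hfirst : m + t + 2 ≤ n → e (m + t + 2) < m
  hav102 : ∀ i j k, m + t + 1 < i → i < j → j < k → k ≤ n → ¬ Pat102 (e i) (e j) (e k)
  hav120 : ∀ i j k, m + t + 1 < i → i < j → j < k → k ≤ n → ¬ Pat120 (e i) (e j) (e k)

lemma prmax_mono {n : ℕ} {e : ℕ → ℕ} {p : ℕ} (h : PrMax n e p) :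
    ∀ i j, 1 ≤ i → i ≤ j → j ≤ p → e i ≤ e j := by
  have step := h.2.2.1
  intro i j hi hij hjp
  obtain ⟨k, rfl⟩ := Nat.exists_eq_add_of_le hij
  clear hij
  induction k with
  | zero => simp
  | succ k ih =>
    have h1 : i + k ≤ p := by omega
    exact le_trans (ih (by omega)) (step (i + k) (by omega) (by omega))

lemma mem_aset_iff {n t : ℕ} {e : ℕ → ℕ} :
    e ∈ Aset n t ↔ ∃ m, CharD n t m e := by
  constructor
  · rintro ⟨⟨h0, hst, hbig⟩, hA102, hA120, ⟨p, hpr, hp⟩, ⟨m, ⟨hub, q, hq1, hqn, hqm⟩, hlt⟩⟩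
    have hmono := prmax_mono hpr
    have hp1 : 1 ≤ p := hpr.1
    have hpn : p ≤ n := hpr.2.1
    -- e p = m
    have hepm : e p = m := by
      have h1 : e p ≤ m := hub p hp1 hpn
      rcases le_or_gt q p with hqp | hpq
      · have := hmono q p hq1 hqp le_rfl
        omega
      · -- q > p, so p < n and descent at p
        have hpn' : p < n := lt_of_lt_of_le hpq hqn
        have hdesc : e (p + 1) < e p := by rcases hpr.2.2.2 with h | h; omega; exact h
        by_contra hne
        have hplt : e p < m := by omega
        rcases eq_or_lt_of_le (Nat.succ_le_of_lt hpq) with h' | h'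
        · -- q = p + 1
          have hq' : e (p + 1) = m := by
            have hh : p + 1 = q := by omega
            rw [hh]; exact hqm
          omega
        · exact hA102 ⟨p, p + 1, q, hp1, by omega, h', hqn, hdesc, by omega⟩
    have hm1 : 1 ≤ m := by
      by_contra h
      have : m = 0 := by omega
      subst this
      simp at hlt
    have hpm : p = m + t + 1 := by omega
    subst hpm
    refine ⟨m, ?_, ?_, h0, hbig, ?_, ?_, hepm, hlt, ?_, ?_, ?_, ?_, ?_⟩
    · exact hm1
    · exact hpn
    · intro i hi1 hi2; exact hst i hi1 (le_trans hi2 hpn)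
    · exact hmono
    · -- tail lower bound
      intro i hi1 hi2
      by_contra hco
      exact hA120 ⟨m + t, m + t + 1, i, by omega, by omega, hi1, hi2, by omega, by omega⟩
    · intro i hi1 hi2; exact hub i (by omega) hi2
    · intro hle
      rcases hpr.2.2.2 with h | h
      · omega
      · rw [show m + t + 1 + 1 = m + t + 2 from rfl] at h
        omega
    · intro i j k hi hij hjk hkn hpat
      exact hA102 ⟨i, j, k, by omega, hij, hjk, hkn, hpat⟩
    · intro i j k hi hij hjk hkn hpat
      exact hA120 ⟨i, j, k, by omega, hij, hjk, hkn, hpat⟩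
  · rintro ⟨m, hc⟩
    obtain ⟨hm, hn, h0, hbig, hstair, hmono, hP, hprev, htaillo, htailhi, hfirst, hav102, hav120⟩ := hc
    have hub : ∀ i, 1 ≤ i → i ≤ n → e i ≤ m := by
      intro i hi1 hi2
      rcases le_or_gt i (m + t + 1) with h | h
      · have := hmono i (m + t + 1) hi1 h le_rfl; omega
      · exact htailhi i h hi2
    refine ⟨⟨h0, ?_, hbig⟩, ?_, ?_, ⟨m + t + 1, ⟨by omega, hn, ?_, ?_⟩, by omega⟩,
      ⟨m, ⟨hub, m + t + 1, by omega, hn, hP⟩, hprev⟩⟩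
    · intro i hi1 hi2
      rcases le_or_gt i (m + t + 1) with h | h
      · exact hstair i hi1 h
      · have := htailhi i h hi2; omega
    · rintro ⟨i, j, k, hi1, hij, hjk, hkn, hb, hc⟩
      rcases le_or_gt j (m + t + 1) with hj | hj
      · have := hmono i j hi1 (le_of_lt hij) hj; omega
      · rcases le_or_gt i (m + t + 1) with hi | hi
        · rcases eq_or_lt_of_le hi with hi' | hi'
          · -- i = m+t+1 : e i = m but e i < e k ≤ m
            have := htailhi k (by omega) hkn
            rw [hi', hP] at hb hc
            omega
          · have h1 : e i ≤ e (m + t) := hmono i (m + t) hi1 (by omega) (by omega)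
            have h2 := htaillo j hj (by omega)
            omega
        · exact hav102 i j k hi hij hjk hkn ⟨hb, hc⟩
    · rintro ⟨i, j, k, hi1, hij, hjk, hkn, hb, hc⟩
      rcases le_or_gt i (m + t + 1) with hi | hi
      · rcases le_or_gt j (m + t + 1) with hj | hj
        · -- i < j ≤ m+t+1 so i ≤ m+t
          have h1 : e i ≤ e (m + t) := hmono i (m + t) hi1 (by omega) (by omega)
          rcases le_or_gt k (m + t + 1) with hk | hk
          · have := hmono i k hi1 (by omega) hk; omega
          · have := htaillo k hk hkn; omega
        · rcases eq_or_lt_of_le hi with hi' | hi'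
          · have := htailhi j hj (by omega)
            rw [hi', hP] at hc; omega
          · have h1 : e i ≤ e (m + t) := hmono i (m + t) hi1 (by omega) (by omega)
            have := htaillo k (by omega) hkn
            omega
      · exact hav120 i j k hi hij hjk hkn ⟨hb, hc⟩
    · intro i hi1 hi2
      exact hmono i (i + 1) hi1 (by omega) (by omega)
    · rcases Nat.lt_or_ge (m + t + 1) n with h | h
      · right
        rw [hP, show m + t + 1 + 1 = m + t + 2 from rfl]
        exact hfirst (by omega)
      · left; omega

/-! ### P-indexed characterization -/

structure CharQ (n m P : ℕ) (e : ℕ → ℕ) : Prop where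
  hm : 1 ≤ m
  hmP : m + 1 ≤ P
  hn : P ≤ n
  h0 : e 0 = 0
  hbig : ∀ i, n < i → e i = 0
  hstair : ∀ i, 1 ≤ i → i ≤ P → e i < i
  hmono : ∀ i j, 1 ≤ i → i ≤ j → j ≤ P → e i ≤ e j
  hP : e P = m
  hprev : ∀ i, i + 1 = P → e i < m
  htaillo : ∀ i j, i + 1 = P → P < j → j ≤ n → e i ≤ e j
  htailhi : ∀ i, P < i → i ≤ n → e i ≤ m
  hfirst : ∀ i, i = P + 1 → i ≤ n → e i < m
  hav102 : ∀ i j k, P < i → i < j → j < k → k ≤ n → ¬ Pat102 (e i) (e j) (e k)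
  hav120 : ∀ i j k, P < i → i < j → j < k → k ≤ n → ¬ Pat120 (e i) (e j) (e k)

lemma charD_iff_charQ {n t m : ℕ} {e : ℕ → ℕ} :
    CharD n t m e ↔ CharQ n m (m + t + 1) e := by
  constructor
  · intro h
    refine ⟨h.hm, by omega, h.hn, h.h0, h.hbig, h.hstair, h.hmono, h.hP, ?_, ?_, ?_, ?_,
      h.hav102, h.hav120⟩
    · intro i hi
      have : i = m + t := by omega
      subst this; exact h.hprev
    · intro i j hi hj1 hj2
      have : i = m + t := by omega
      subst this; exact h.htaillo j hj1 hj2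
    · exact h.htailhi
    · intro i hi1 hi2
      have : i = m + t + 2 := by omega
      subst this; exact h.hfirst hi2
  · intro h
    refine ⟨h.hm, h.hn, h.h0, h.hbig, h.hstair, h.hmono, h.hP, h.hprev (m + t) rfl,
      fun i hi1 hi2 => h.htaillo (m + t) i rfl hi1 hi2, h.htailhi, h.hfirst (m + t + 2) rfl,
      h.hav102, h.hav120⟩

lemma mem_aset_iff' {n t : ℕ} {e : ℕ → ℕ} :
    e ∈ Aset n t ↔ ∃ m, CharQ n m (m + t + 1) e := by
  rw [mem_aset_iff]
  exact exists_congr fun m => charD_iff_charQ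

/-! ### first-descent position -/

noncomputable def pOf (e : ℕ → ℕ) : ℕ :=
  sInf {p | e (p + 1) < e p}

lemma pOf_spec {n m P : ℕ} {e : ℕ → ℕ} (h : CharQ n m P e) : pOf e = P := by
  have hdesc : e (P + 1) < e P := by
    rcases Nat.lt_or_ge P n with hlt | hge
    · rw [h.hP]
      exact h.hfirst (P + 1) rfl (by omega)
    · have hn : P = n := le_antisymm h.hn hge
      have : e (P + 1) = 0 := h.hbig _ (by omega)
      rw [this, h.hP]; exact h.hm
  have hnot : ∀ q, q < P → ¬ e (q + 1) < e q := by
    intro q hq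
    simp only [not_lt]
    rcases Nat.eq_zero_or_pos q with rfl | hq1
    · rw [h.h0]; exact Nat.zero_le _
    · exact h.hmono q (q + 1) hq1 (by omega) (by omega)
  refine le_antisymm (Nat.sInf_le hdesc) ?_
  by_contra hco
  push_neg at hco
  have hmem := Nat.sInf_mem (⟨P, hdesc⟩ : {p | e (p + 1) < e p}.Nonempty)
  exact hnot _ hco hmem

/-! ### The maps -/

noncomputable def phiA (e : ℕ → ℕ) : ℕ → ℕ :=
  fun i => if i + 2 ≤ pOf e then e i else e i - 1

noncomputable def psiA (n : ℕ) (e : ℕ → ℕ) : ℕ → ℕ :=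
  fun i => if i + 2 ≤ pOf e then e i else if i ≤ n then e i + 1 else 0

noncomputable def phiB (e : ℕ → ℕ) : ℕ → ℕ :=
  fun i => if i + 2 ≤ pOf e then e i else e (i + 1)

noncomputable def psiB (e : ℕ → ℕ) : ℕ → ℕ :=
  fun i => if i + 1 ≤ pOf e then e i else e (i - 1)

/-! ### Map A : case e q < e (q+1), rank t ↦ t+1 -/

lemma mapA_mem {N m q : ℕ} {e : ℕ → ℕ} (h : CharQ N m (q + 2) e) (hA : e q < e (q + 1)) :
    CharQ N (m - 1) (q + 2) (fun i => if i ≤ q then e i else e i - 1) := by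
  have hvm : e (q + 1) < m := h.hprev (q + 1) rfl
  have hv1 : 1 ≤ e (q + 1) := by omega
  have hm2 : 2 ≤ m := by omega
  have hlo : ∀ i, q + 2 < i → i ≤ N → e (q + 1) ≤ e i :=
    fun i hi hiN => h.htaillo (q + 1) i rfl hi hiN
  have hPm : e (q + 2) = m := h.hP
  have hmP := h.hmP
  refine ⟨by omega, by omega, h.hn, ?_, ?_, ?_, ?_, ?_, ?_, ?_, ?_, ?_, ?_, ?_⟩
  · simp only [if_pos (Nat.zero_le q), h.h0]
  · intro i hi
    have hn := h.hn
    simp only [if_neg (by omega : ¬ i ≤ q), h.hbig i hi]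
  · intro i hi1 hi2
    by_cases hc : i ≤ q
    · simp only [if_pos hc]; exact h.hstair i hi1 (by omega)
    · simp only [if_neg hc]; have := h.hstair i hi1 hi2; omega
  · intro i j hi1 hij hj2
    by_cases hcj : j ≤ q
    · simp only [if_pos (le_trans hij hcj), if_pos hcj]
      exact h.hmono i j hi1 hij (by omega)
    · by_cases hci : i ≤ q
      · simp only [if_pos hci, if_neg hcj]
        have h1 : e i ≤ e q := h.hmono i q hi1 hci (by omega)
        have h2 : e (q + 1) ≤ e j := h.hmono (q + 1) j (by omega) (by omega) hj2
        omega
      · simp only [if_neg hci, if_neg hcj]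
        have := h.hmono i j (by omega) hij hj2
        omega
  · simp only [if_neg (by omega : ¬ q + 2 ≤ q), hPm]
  · intro i hi
    have hiq : i = q + 1 := by omega
    subst hiq
    simp only [if_neg (by omega : ¬ q + 1 ≤ q)]
    omega
  · intro i j hi hj hjN
    have hiq : i = q + 1 := by omega
    subst hiq
    simp only [if_neg (by omega : ¬ q + 1 ≤ q), if_neg (by omega : ¬ j ≤ q)]
    have := hlo j hj hjN
    omega
  · intro i hi hiN
    simp only [if_neg (by omega : ¬ i ≤ q)]
    have := h.htailhi i (by omega) hiN
    omega
  · intro i hi hiN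
    subst hi
    simp only [if_neg (by omega : ¬ q + 2 + 1 ≤ q)]
    have h1 := h.hfirst (q + 2 + 1) rfl hiN
    have h2 := hlo (q + 2 + 1) (by omega) hiN
    omega
  · intro i j k hi hij hjk hkN hpat
    refine h.hav102 i j k hi hij hjk hkN ?_
    have g1 := hlo i hi (by omega)
    have g2 := hlo j (by omega) (by omega)
    have g3 := hlo k (by omega) hkN
    simp only [if_neg (by omega : ¬ i ≤ q), if_neg (by omega : ¬ j ≤ q),
      if_neg (by omega : ¬ k ≤ q)] at hpat
    unfold Pat102 at *
    omega
  · intro i j k hi hij hjk hkN hpat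
    refine h.hav120 i j k hi hij hjk hkN ?_
    have g1 := hlo i hi (by omega)
    have g2 := hlo j (by omega) (by omega)
    have g3 := hlo k (by omega) hkN
    simp only [if_neg (by omega : ¬ i ≤ q), if_neg (by omega : ¬ j ≤ q),
      if_neg (by omega : ¬ k ≤ q)] at hpat
    unfold Pat120 at *
    omega

/-! ### Map ΨA : inverse of A -/

lemma psiA_mem {N m q : ℕ} {e : ℕ → ℕ} (h : CharQ N m (q + 2) e) (hq : m ≤ q) :
    CharQ N (m + 1) (q + 2) (fun i => if i ≤ q then e i else if i ≤ N then e i + 1 else 0) := by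
  have hvm : e (q + 1) < m := h.hprev (q + 1) rfl
  have hlo : ∀ i, q + 2 < i → i ≤ N → e (q + 1) ≤ e i :=
    fun i hi hiN => h.htaillo (q + 1) i rfl hi hiN
  have hPm : e (q + 2) = m := h.hP
  have hmP := h.hmP
  have hnn := h.hn
  refine ⟨by omega, by omega, h.hn, ?_, ?_, ?_, ?_, ?_, ?_, ?_, ?_, ?_, ?_, ?_⟩
  · simp only [if_pos (Nat.zero_le q), h.h0]
  · intro i hi
    simp only [if_neg (by omega : ¬ i ≤ q), if_neg (by omega : ¬ i ≤ N)]
  · intro i hi1 hi2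
    by_cases hc : i ≤ q
    · simp only [if_pos hc]; exact h.hstair i hi1 (by omega)
    · simp only [if_neg hc, if_pos (by omega : i ≤ N)]
      have hiq : i = q + 1 ∨ i = q + 2 := by omega
      rcases hiq with rfl | rfl
      · omega
      · omega
  · intro i j hi1 hij hj2
    by_cases hcj : j ≤ q
    · simp only [if_pos (le_trans hij hcj), if_pos hcj]
      exact h.hmono i j hi1 hij (by omega)
    · by_cases hci : i ≤ q
      · simp only [if_pos hci, if_neg hcj, if_pos (by omega : j ≤ N)]
        have := h.hmono i j hi1 hij hj2
        omega
      · simp only [if_neg hci, if_neg hcj, if_pos (by omega : i ≤ N),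
          if_pos (by omega : j ≤ N)]
        have := h.hmono i j (by omega) hij hj2
        omega
  · simp only [if_neg (by omega : ¬ q + 2 ≤ q), if_pos (by omega : q + 2 ≤ N), hPm]
  · intro i hi
    have hiq : i = q + 1 := by omega
    subst hiq
    simp only [if_neg (by omega : ¬ q + 1 ≤ q), if_pos (by omega : q + 1 ≤ N)]
    omega
  · intro i j hi hj hjN
    have hiq : i = q + 1 := by omega
    subst hiq
    simp only [if_neg (by omega : ¬ q + 1 ≤ q), if_neg (by omega : ¬ j ≤ q),
      if_pos (by omega : q + 1 ≤ N), if_pos (by omega : j ≤ N)]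
    have := hlo j hj hjN
    omega
  · intro i hi hiN
    simp only [if_neg (by omega : ¬ i ≤ q), if_pos (by omega : i ≤ N)]
    have := h.htailhi i (by omega) hiN
    omega
  · intro i hi hiN
    subst hi
    simp only [if_neg (by omega : ¬ q + 2 + 1 ≤ q), if_pos (by omega : q + 2 + 1 ≤ N)]
    have h1 := h.hfirst (q + 2 + 1) rfl hiN
    omega
  · intro i j k hi hij hjk hkN hpat
    refine h.hav102 i j k hi hij hjk hkN ?_
    simp only [if_neg (by omega : ¬ i ≤ q), if_neg (by omega : ¬ j ≤ q),
      if_neg (by omega : ¬ k ≤ q), if_pos (by omega : i ≤ N), if_pos (by omega : j ≤ N),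
      if_pos (by omega : k ≤ N)] at hpat
    unfold Pat102 at *
    omega
  · intro i j k hi hij hjk hkN hpat
    refine h.hav120 i j k hi hij hjk hkN ?_
    simp only [if_neg (by omega : ¬ i ≤ q), if_neg (by omega : ¬ j ≤ q),
      if_neg (by omega : ¬ k ≤ q), if_pos (by omega : i ≤ N), if_pos (by omega : j ≤ N),
      if_pos (by omega : k ≤ N)] at hpat
    unfold Pat120 at *
    omega

lemma psiA_strict {N m q : ℕ} {e : ℕ → ℕ} (h : CharQ N m (q + 2) e) :
    (fun i => if i ≤ q then e i else if i ≤ N then e i + 1 else 0) q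
      < (fun i => if i ≤ q then e i else if i ≤ N then e i + 1 else 0) (q + 1) := by
  have hnn := h.hn
  simp only [if_pos (le_refl q), if_neg (by omega : ¬ q + 1 ≤ q), if_pos (by omega : q + 1 ≤ N)]
  have : e q ≤ e (q + 1) := by
    rcases Nat.eq_zero_or_pos q with rfl | hq1
    · rw [h.h0]; exact Nat.zero_le _
    · exact h.hmono q (q + 1) hq1 (by omega) (by omega)
  omega

/-! ### Map B : case e q = e (q+1), (n, t) ↦ (n-1, t-1) -/

lemma mapB_mem {N m q : ℕ} {e : ℕ → ℕ} (h : CharQ N m (q + 2) e) (hB : e q = e (q + 1))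
    (hmq : m ≤ q) :
    CharQ (N - 1) m (q + 1) (fun i => if i ≤ q then e i else e (i + 1)) := by
  have hvm : e (q + 1) < m := h.hprev (q + 1) rfl
  have hlo : ∀ i, q + 2 < i → i ≤ N → e (q + 1) ≤ e i :=
    fun i hi hiN => h.htaillo (q + 1) i rfl hi hiN
  have hPm : e (q + 2) = m := h.hP
  have hnn := h.hn
  refine ⟨h.hm, by omega, by omega, ?_, ?_, ?_, ?_, ?_, ?_, ?_, ?_, ?_, ?_, ?_⟩
  · simp only [if_pos (Nat.zero_le q), h.h0]
  · intro i hi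
    simp only [if_neg (by omega : ¬ i ≤ q)]
    exact h.hbig (i + 1) (by omega)
  · intro i hi1 hi2
    by_cases hc : i ≤ q
    · simp only [if_pos hc]; exact h.hstair i hi1 (by omega)
    · have hiq : i = q + 1 := by omega
      subst hiq
      simp only [if_neg (by omega : ¬ q + 1 ≤ q)]
      rw [hPm]; omega
  · intro i j hi1 hij hj2
    by_cases hcj : j ≤ q
    · simp only [if_pos (le_trans hij hcj), if_pos hcj]
      exact h.hmono i j hi1 hij (by omega)
    · by_cases hci : i ≤ q
      · simp only [if_pos hci, if_neg hcj]
        have h1 : e i ≤ e (q + 1) := h.hmono i (q + 1) hi1 (by omega) (by omega)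
        have h2 : e (j + 1) = m := by
          have : j = q + 1 := by omega
          subst this; exact hPm
        omega
      · simp only [if_neg hci, if_neg hcj]
        exact h.hmono (i + 1) (j + 1) (by omega) (by omega) (by omega)
  · simp only [if_neg (by omega : ¬ q + 1 ≤ q)]
    exact hPm
  · intro i hi
    simp only [if_pos (by omega : i ≤ q)]
    rw [show i = q by omega]
    omega
  · intro i j hi hj hjN
    simp only [if_pos (by omega : i ≤ q), if_neg (by omega : ¬ j ≤ q)]
    rw [show i = q by omega]
    have := hlo (j + 1) (by omega) (by omega)
    omega
  · intro i hi hiN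
    simp only [if_neg (by omega : ¬ i ≤ q)]
    exact h.htailhi (i + 1) (by omega) (by omega)
  · intro i hi hiN
    subst hi
    simp only [if_neg (by omega : ¬ q + 1 + 1 ≤ q)]
    exact h.hfirst (q + 1 + 1 + 1) rfl (by omega)
  · intro i j k hi hij hjk hkN hpat
    refine h.hav102 (i + 1) (j + 1) (k + 1) (by omega) (by omega) (by omega) (by omega) ?_
    simp only [if_neg (by omega : ¬ i ≤ q), if_neg (by omega : ¬ j ≤ q),
      if_neg (by omega : ¬ k ≤ q)] at hpat
    exact hpat
  · intro i j k hi hij hjk hkN hpat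
    refine h.hav120 (i + 1) (j + 1) (k + 1) (by omega) (by omega) (by omega) (by omega) ?_
    simp only [if_neg (by omega : ¬ i ≤ q), if_neg (by omega : ¬ j ≤ q),
      if_neg (by omega : ¬ k ≤ q)] at hpat
    exact hpat

/-! ### Map ΨB : inverse of B -/

lemma psiB_mem {N m q : ℕ} {e : ℕ → ℕ} (h : CharQ (N - 1) m (q + 1) e) :
    CharQ N m (q + 2) (fun i => if i ≤ q then e i else e (i - 1)) := by
  have hnn := h.hn
  have hN : q + 2 ≤ N := by omega
  have hvm : e q < m := h.hprev q rfl
  have hlo : ∀ i, q + 1 < i → i ≤ N - 1 → e q ≤ e i :=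
    fun i hi hiN => h.htaillo q i rfl hi hiN
  have hPm : e (q + 1) = m := h.hP
  have hmP := h.hmP
  refine ⟨h.hm, by omega, hN, ?_, ?_, ?_, ?_, ?_, ?_, ?_, ?_, ?_, ?_, ?_⟩
  · simp only [if_pos (Nat.zero_le q), h.h0]
  · intro i hi
    simp only [if_neg (by omega : ¬ i ≤ q)]
    exact h.hbig (i - 1) (by omega)
  · intro i hi1 hi2
    by_cases hc : i ≤ q
    · simp only [if_pos hc]; exact h.hstair i hi1 (by omega)
    · simp only [if_neg hc]
      have hiq : i = q + 1 ∨ i = q + 2 := by omega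
      rcases hiq with rfl | rfl
      · simp only [Nat.add_sub_cancel]
        rcases Nat.eq_zero_or_pos q with rfl | hq1
        · rw [h.h0]; omega
        · have := h.hstair q hq1 (by omega); omega
      · have hq2 : q + 2 - 1 = q + 1 := by omega
        rw [hq2, hPm]; omega
  · intro i j hi1 hij hj2
    by_cases hcj : j ≤ q
    · simp only [if_pos (le_trans hij hcj), if_pos hcj]
      exact h.hmono i j hi1 hij (by omega)
    · by_cases hci : i ≤ q
      · simp only [if_pos hci, if_neg hcj]
        exact h.hmono i (j - 1) hi1 (by omega) (by omega)
      · simp only [if_neg hci, if_neg hcj]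
        rcases Nat.eq_zero_or_pos (i - 1) with hz | hp
        · rw [hz, h.h0]; exact Nat.zero_le _
        · exact h.hmono (i - 1) (j - 1) hp (by omega) (by omega)
  · simp only [if_neg (by omega : ¬ q + 2 ≤ q)]
    have hq2 : q + 2 - 1 = q + 1 := by omega
    rw [hq2, hPm]
  · intro i hi
    have hiq : i = q + 1 := by omega
    subst hiq
    simp only [if_neg (by omega : ¬ q + 1 ≤ q), Nat.add_sub_cancel]
    omega
  · intro i j hi hj hjN
    have hiq : i = q + 1 := by omega
    subst hiq
    simp only [if_neg (by omega : ¬ q + 1 ≤ q), if_neg (by omega : ¬ j ≤ q),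
      Nat.add_sub_cancel]
    exact hlo (j - 1) (by omega) (by omega)
  · intro i hi hiN
    simp only [if_neg (by omega : ¬ i ≤ q)]
    exact h.htailhi (i - 1) (by omega) (by omega)
  · intro i hi hiN
    subst hi
    simp only [if_neg (by omega : ¬ q + 2 + 1 ≤ q)]
    have hq2 : q + 2 + 1 - 1 = q + 1 + 1 := by omega
    rw [hq2]
    exact h.hfirst (q + 1 + 1) rfl (by omega)
  · intro i j k hi hij hjk hkN hpat
    refine h.hav102 (i - 1) (j - 1) (k - 1) (by omega) (by omega) (by omega) (by omega) ?_
    simp only [if_neg (by omega : ¬ i ≤ q), if_neg (by omega : ¬ j ≤ q),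
      if_neg (by omega : ¬ k ≤ q)] at hpat
    exact hpat
  · intro i j k hi hij hjk hkN hpat
    refine h.hav120 (i - 1) (j - 1) (k - 1) (by omega) (by omega) (by omega) (by omega) ?_
    simp only [if_neg (by omega : ¬ i ≤ q), if_neg (by omega : ¬ j ≤ q),
      if_neg (by omega : ¬ k ≤ q)] at hpat
    exact hpat

lemma psiB_eq {q : ℕ} (e : ℕ → ℕ) :
    (fun i => if i ≤ q then e i else e (i - 1)) q
      = (fun i => if i ≤ q then e i else e (i - 1)) (q + 1) := by
  simp only [if_pos (le_refl q), if_neg (by omega : ¬ q + 1 ≤ q), Nat.add_sub_cancel]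

/-! ### Compositions -/

lemma compA1 {N m q : ℕ} {e : ℕ → ℕ} (h : CharQ N m (q + 2) e) (hA : e q < e (q + 1)) :
    (fun i => if i ≤ q then (fun j => if j ≤ q then e j else e j - 1) i
      else if i ≤ N then (fun j => if j ≤ q then e j else e j - 1) i + 1 else 0) = e := by
  have hv1 : 1 ≤ e (q + 1) := by omega
  have hlo : ∀ i, q + 2 < i → i ≤ N → e (q + 1) ≤ e i :=
    fun i hi hiN => h.htaillo (q + 1) i rfl hi hiN
  have hPm : e (q + 2) = m := h.hP
  have hm1 := h.hm
  have hnn := h.hn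
  funext i
  by_cases hc : i ≤ q
  · simp only [if_pos hc]
  · simp only [if_neg hc]
    by_cases hcN : i ≤ N
    · simp only [if_pos hcN]
      have h1 : 1 ≤ e i := by
        rcases (by omega : i = q + 1 ∨ i = q + 2 ∨ (q + 2 < i ∧ i ≤ N)) with rfl | rfl | ⟨h2, h3⟩
        · exact hv1
        · omega
        · have := hlo i h2 h3; omega
      omega
    · simp only [if_neg hcN]
      rw [h.hbig i (by omega)]

lemma compA2 {N m q : ℕ} {e : ℕ → ℕ} (h : CharQ N m (q + 2) e) :
    (fun i => if i ≤ q then (fun j => if j ≤ q then e j else if j ≤ N then e j + 1 else 0) i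
      else (fun j => if j ≤ q then e j else if j ≤ N then e j + 1 else 0) i - 1) = e := by
  funext i
  by_cases hc : i ≤ q
  · simp only [if_pos hc]
  · simp only [if_neg hc]
    by_cases hcN : i ≤ N
    · simp only [if_pos hcN]; omega
    · simp only [if_neg hcN]
      rw [h.hbig i (by omega)]

lemma compB1 {N m q : ℕ} {e : ℕ → ℕ} (h : CharQ N m (q + 2) e) (hB : e q = e (q + 1)) :
    (fun i => if i ≤ q then (fun j => if j ≤ q then e j else e (j + 1)) i
      else (fun j => if j ≤ q then e j else e (j + 1)) (i - 1)) = e := by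
  funext i
  by_cases hc : i ≤ q
  · simp only [if_pos hc]
  · simp only [if_neg hc]
    rcases (by omega : i = q + 1 ∨ q + 2 ≤ i) with rfl | h2
    · simp only [Nat.add_sub_cancel, if_pos (le_refl q)]
      exact hB
    · rw [if_neg (by omega : ¬ i - 1 ≤ q)]
      have : i - 1 + 1 = i := by omega
      rw [this]

lemma compB2 {q : ℕ} (e : ℕ → ℕ) :
    (fun i => if i ≤ q then (fun j => if j ≤ q then e j else e (j - 1)) i
      else (fun j => if j ≤ q then e j else e (j - 1)) (i + 1)) = e := by
  funext i
  by_cases hc : i ≤ q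
  · simp only [if_pos hc]
  · simp only [if_neg hc, if_neg (by omega : ¬ i + 1 ≤ q), Nat.add_sub_cancel]

/-! ### Set level -/

lemma aset_finite (n t : ℕ) : (Aset n t).Finite := by
  classical
  have hsub : Aset n t ⊆
      (fun f : Fin (n + 1) → Fin (n + 1) =>
        (fun i => if h : i < n + 1 then (f ⟨i, h⟩ : ℕ) else 0)) '' Set.univ := by
    rintro e ⟨⟨h0, hst, hbig⟩, -⟩
    have hbd : ∀ j, e j ≤ n := by
      intro j
      rcases Nat.eq_zero_or_pos j with rfl | hj
      · omega
      · rcases Nat.lt_or_ge n j with h | h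
        · rw [hbig j h]; omega
        · have := hst j hj (by omega); omega
    refine ⟨fun j => ⟨e j, by have := hbd j; omega⟩, Set.mem_univ _, ?_⟩
    funext i
    by_cases h : i < n + 1
    · simp only [dif_pos h]
    · simp only [dif_neg h]
      rw [hbig i (by omega)]
  exact Set.Finite.subset (Set.finite_univ.image _) hsub

lemma aset_empty {k u : ℕ} (h : k ≤ u + 1) : Aset k u = ∅ := by
  ext e
  simp only [Set.mem_empty_iff_false, iff_false]
  intro he
  rw [mem_aset_iff'] at he
  obtain ⟨m, hc⟩ := he
  have h1 := hc.hm
  have h2 := hc.hn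
  omega

noncomputable def PhiA (e : ℕ → ℕ) : ℕ → ℕ :=
  fun i => if i ≤ pOf e - 2 then e i else e i - 1

noncomputable def PhiB (e : ℕ → ℕ) : ℕ → ℕ :=
  fun i => if i ≤ pOf e - 2 then e i else e (i + 1)

def Pred (e : ℕ → ℕ) : Prop := e (pOf e - 2) = e (pOf e - 1)

lemma aset_mono {n t m : ℕ} {e : ℕ → ℕ} (h : CharQ n m (m + t + 1) e) :
    e (m + t) ≤ e (m + t + 1) := by
  have hm := h.hm
  exact h.hmono (m + t) (m + t + 1) (by omega) (by omega) (by omega)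

/-- Case A bijection: `PhiA` maps `SA` bijectively onto `Aset N (s+2)`. -/
lemma imageA {N s : ℕ} :
    PhiA '' {e | e ∈ Aset N (s + 1) ∧ ¬ Pred e} = Aset N (s + 2) := by
  ext e'
  constructor
  · rintro ⟨e, ⟨heA, hne⟩, rfl⟩
    rw [mem_aset_iff'] at heA
    obtain ⟨m, hc⟩ := heA
    have hm := hc.hm
    have hq : m + (s + 1) + 1 = (m + s) + 2 := by ring
    rw [hq] at hc
    have hp : pOf e = m + s + 2 := pOf_spec hc
    have hPred : e (m + s) < e (m + s + 1) := by
      have hmono : e (m + s) ≤ e (m + s + 1) :=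
        hc.hmono (m + s) (m + s + 1) (by omega) (by omega) (by omega)
      have : ¬ e (m + s) = e (m + s + 1) := by
        unfold Pred at hne
        rw [hp] at hne
        simpa using hne
      omega
    have himg := mapA_mem hc hPred
    have hm2 : 2 ≤ m := by
      have h1 := hc.hprev (m + s + 1) rfl
      omega
    have hPhiA : PhiA e = fun i => if i ≤ m + s then e i else e i - 1 := by
      funext i
      simp only [PhiA, hp]
      simp only [Nat.add_sub_cancel]
    rw [mem_aset_iff']
    refine ⟨m - 1, ?_⟩
    rw [show m - 1 + (s + 2) + 1 = m + s + 2 by omega, hPhiA]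
    exact himg
  · intro he'
    rw [mem_aset_iff'] at he'
    obtain ⟨μ, hc⟩ := he'
    have hm := hc.hm
    rw [show μ + (s + 2) + 1 = (μ + s + 1) + 2 by ring] at hc
    set q := μ + s + 1 with hqdef
    have hp' : pOf e' = q + 2 := pOf_spec hc
    have hpsi := psiA_mem hc (by omega)
    have hstrict := psiA_strict hc
    set g : ℕ → ℕ := fun i => if i ≤ q then e' i else if i ≤ N then e' i + 1 else 0 with hgdef
    have hpg : pOf g = q + 2 := pOf_spec hpsi
    have hgA : g ∈ Aset N (s + 1) := by
      rw [mem_aset_iff']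
      exact ⟨μ + 1, by rw [show μ + 1 + (s + 1) + 1 = q + 2 by omega]; exact hpsi⟩
    refine ⟨g, ⟨hgA, ?_⟩, ?_⟩
    · unfold Pred
      rw [hpg]
      simp only [show q + 2 - 2 = q by omega, show q + 2 - 1 = q + 1 by omega]
      omega
    · have : PhiA g = fun i => if i ≤ q then g i else g i - 1 := by
        funext i
        simp only [PhiA, hpg]
        simp only [Nat.add_sub_cancel]
      rw [this, hgdef]
      exact compA2 hc

lemma injA {N s : ℕ} :
    Set.InjOn PhiA {e | e ∈ Aset N (s + 1) ∧ ¬ Pred e} := by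
  rintro e1 ⟨h1A, h1ne⟩ e2 ⟨h2A, h2ne⟩ heq
  rw [mem_aset_iff'] at h1A h2A
  obtain ⟨m1, hc1⟩ := h1A
  obtain ⟨m2, hc2⟩ := h2A
  rw [show m1 + (s + 1) + 1 = (m1 + s) + 2 by ring] at hc1
  rw [show m2 + (s + 1) + 1 = (m2 + s) + 2 by ring] at hc2
  have hp1 : pOf e1 = m1 + s + 2 := pOf_spec hc1
  have hp2 : pOf e2 = m2 + s + 2 := pOf_spec hc2
  have hm1 := hc1.hm
  have hm2 := hc2.hm
  have hPred1 : e1 (m1 + s) < e1 (m1 + s + 1) := by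
    have hmono := hc1.hmono (m1 + s) (m1 + s + 1) (by omega) (by omega) (by omega)
    unfold Pred at h1ne
    rw [hp1] at h1ne
    simp only [show m1 + s + 2 - 2 = m1 + s by omega,
      show m1 + s + 2 - 1 = m1 + s + 1 by omega] at h1ne
    omega
  have hPred2 : e2 (m2 + s) < e2 (m2 + s + 1) := by
    have hmono := hc2.hmono (m2 + s) (m2 + s + 1) (by omega) (by omega) (by omega)
    unfold Pred at h2ne
    rw [hp2] at h2ne
    simp only [show m2 + s + 2 - 2 = m2 + s by omega,
      show m2 + s + 2 - 1 = m2 + s + 1 by omega] at h2ne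
    omega
  have hPhi1 : PhiA e1 = fun i => if i ≤ m1 + s then e1 i else e1 i - 1 := by
    funext i; simp only [PhiA, hp1]; simp only [Nat.add_sub_cancel]
  have hPhi2 : PhiA e2 = fun i => if i ≤ m2 + s then e2 i else e2 i - 1 := by
    funext i; simp only [PhiA, hp2]; simp only [Nat.add_sub_cancel]
  -- the common image determines q
  have himg1 := mapA_mem hc1 hPred1
  have himg2 := mapA_mem hc2 hPred2
  have hq12 : m1 = m2 := by
    have e1' : pOf (PhiA e1) = m1 + s + 2 := by rw [hPhi1]; exact pOf_spec himg1
    have e2' : pOf (PhiA e2) = m2 + s + 2 := by rw [hPhi2]; exact pOf_spec himg2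
    rw [heq] at e1'
    omega
  subst hq12
  have hcomp1 := compA1 hc1 hPred1
  have hcomp2 := compA1 hc2 hPred2
  rw [← hcomp1, ← hcomp2]
  rw [hPhi1] at heq
  rw [hPhi2] at heq
  rw [heq]

lemma imageB {N s : ℕ} :
    PhiB '' {e | e ∈ Aset N (s + 1) ∧ Pred e} = Aset (N - 1) s := by
  ext e'
  constructor
  · rintro ⟨e, ⟨heA, hPr⟩, rfl⟩
    rw [mem_aset_iff'] at heA
    obtain ⟨m, hc⟩ := heA
    have hm := hc.hm
    rw [show m + (s + 1) + 1 = (m + s) + 2 by ring] at hc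
    have hp : pOf e = m + s + 2 := pOf_spec hc
    have hB : e (m + s) = e (m + s + 1) := by
      unfold Pred at hPr
      rw [hp] at hPr
      simpa only [show m + s + 2 - 2 = m + s by omega,
        show m + s + 2 - 1 = m + s + 1 by omega] using hPr
    have himg := mapB_mem hc hB (by omega)
    have hPhiB : PhiB e = fun i => if i ≤ m + s then e i else e (i + 1) := by
      funext i; simp only [PhiB, hp]; simp only [Nat.add_sub_cancel]
    rw [mem_aset_iff']
    exact ⟨m, by rw [show m + s + 1 = (m + s) + 1 by ring, hPhiB]; exact himg⟩
  · intro he'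
    rw [mem_aset_iff'] at he'
    obtain ⟨μ, hc⟩ := he'
    have hm := hc.hm
    rw [show μ + s + 1 = (μ + s) + 1 by ring] at hc
    set q := μ + s with hqdef
    have hpsi := psiB_mem hc
    set g : ℕ → ℕ := fun i => if i ≤ q then e' i else e' (i - 1) with hgdef
    have hpg : pOf g = q + 2 := pOf_spec hpsi
    have hgA : g ∈ Aset N (s + 1) := by
      rw [mem_aset_iff']
      exact ⟨μ, by rw [show μ + (s + 1) + 1 = q + 2 by omega]; exact hpsi⟩
    refine ⟨g, ⟨hgA, ?_⟩, ?_⟩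
    · unfold Pred
      rw [hpg]
      simp only [show q + 2 - 2 = q by omega, show q + 2 - 1 = q + 1 by omega]
      exact psiB_eq e'
    · have : PhiB g = fun i => if i ≤ q then g i else g (i + 1) := by
        funext i; simp only [PhiB, hpg]; simp only [Nat.add_sub_cancel]
      rw [this, hgdef]
      exact compB2 e'

lemma injB {N s : ℕ} :
    Set.InjOn PhiB {e | e ∈ Aset N (s + 1) ∧ Pred e} := by
  rintro e1 ⟨h1A, h1p⟩ e2 ⟨h2A, h2p⟩ heq
  rw [mem_aset_iff'] at h1A h2A
  obtain ⟨m1, hc1⟩ := h1A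
  obtain ⟨m2, hc2⟩ := h2A
  rw [show m1 + (s + 1) + 1 = (m1 + s) + 2 by ring] at hc1
  rw [show m2 + (s + 1) + 1 = (m2 + s) + 2 by ring] at hc2
  have hp1 : pOf e1 = m1 + s + 2 := pOf_spec hc1
  have hp2 : pOf e2 = m2 + s + 2 := pOf_spec hc2
  have hm1 := hc1.hm
  have hm2 := hc2.hm
  have hB1 : e1 (m1 + s) = e1 (m1 + s + 1) := by
    unfold Pred at h1p
    rw [hp1] at h1p
    simpa only [show m1 + s + 2 - 2 = m1 + s by omega,
      show m1 + s + 2 - 1 = m1 + s + 1 by omega] using h1p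
  have hB2 : e2 (m2 + s) = e2 (m2 + s + 1) := by
    unfold Pred at h2p
    rw [hp2] at h2p
    simpa only [show m2 + s + 2 - 2 = m2 + s by omega,
      show m2 + s + 2 - 1 = m2 + s + 1 by omega] using h2p
  have hPhi1 : PhiB e1 = fun i => if i ≤ m1 + s then e1 i else e1 (i + 1) := by
    funext i; simp only [PhiB, hp1]; simp only [Nat.add_sub_cancel]
  have hPhi2 : PhiB e2 = fun i => if i ≤ m2 + s then e2 i else e2 (i + 1) := by
    funext i; simp only [PhiB, hp2]; simp only [Nat.add_sub_cancel]
  have himg1 := mapB_mem hc1 hB1 (by omega)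
  have himg2 := mapB_mem hc2 hB2 (by omega)
  have hq12 : m1 = m2 := by
    have e1' : pOf (PhiB e1) = m1 + s + 1 := by rw [hPhi1]; exact pOf_spec himg1
    have e2' : pOf (PhiB e2) = m2 + s + 1 := by rw [hPhi2]; exact pOf_spec himg2
    rw [heq] at e1'
    omega
  subst hq12
  have hcomp1 := compB1 hc1 hB1
  have hcomp2 := compB1 hc2 hB2
  rw [← hcomp1, ← hcomp2]
  rw [hPhi1] at heq
  rw [hPhi2] at heq
  rw [heq]

/-- The key Pascal-type recurrence. -/
lemma key (N s : ℕ) :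
    (Aset N (s + 1)).ncard = (Aset N (s + 2)).ncard + (Aset (N - 1) s).ncard := by
  classical
  have hfin : (Aset N (s + 1)).Finite := aset_finite N (s + 1)
  have hSA : {e | e ∈ Aset N (s + 1) ∧ ¬ Pred e}.Finite :=
    hfin.subset (fun e he => he.1)
  have hSB : {e | e ∈ Aset N (s + 1) ∧ Pred e}.Finite :=
    hfin.subset (fun e he => he.1)
  have hunion : Aset N (s + 1) =
      {e | e ∈ Aset N (s + 1) ∧ ¬ Pred e} ∪ {e | e ∈ Aset N (s + 1) ∧ Pred e} := by
    ext e
    simp only [Set.mem_union, Set.mem_setOf_eq]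
    by_cases h : Pred e <;> tauto
  have hdisj : Disjoint {e | e ∈ Aset N (s + 1) ∧ ¬ Pred e}
      {e | e ∈ Aset N (s + 1) ∧ Pred e} := by
    rw [Set.disjoint_left]
    rintro e ⟨-, h1⟩ ⟨-, h2⟩
    exact h1 h2
  rw [hunion, Set.ncard_union_eq hdisj hSA hSB]
  congr 1
  · rw [← imageA (N := N) (s := s), Set.ncard_image_of_injOn injA]
  · rw [← imageB (N := N) (s := s), Set.ncard_image_of_injOn injB]

lemma main_aux (n : ℕ) (hn : 2 ≤ n) :
    ∀ d t, 1 ≤ t → t + d = n - 1 →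
      (Aset (n + 1) t).ncard = ∑ i ∈ Finset.Icc (t - 1) (n - 2), (Aset n i).ncard := by
  intro d
  induction d with
  | zero =>
    intro t ht1 htd
    obtain ⟨k, rfl⟩ : ∃ k, n = k + 2 := ⟨n - 2, by omega⟩
    obtain rfl : t = k + 1 := by omega
    have hkey := key (k + 3) k
    rw [aset_empty (by omega : k + 3 ≤ (k + 2) + 1), Set.ncard_empty,
      show k + 3 - 1 = k + 2 by omega] at hkey
    rw [show k + 2 + 1 = k + 3 by omega, hkey,
      show k + 1 - 1 = k by omega, show k + 2 - 2 = k by omega,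
      Finset.Icc_self, Finset.sum_singleton, Nat.zero_add]
  | succ d ih =>
    intro t ht1 htd
    obtain ⟨s, rfl⟩ : ∃ s, t = s + 1 := ⟨t - 1, by omega⟩
    have hkey := key (n + 1) s
    rw [show n + 1 - 1 = n by omega] at hkey
    have hih := ih (s + 2) (by omega) (by omega)
    rw [show s + 2 - 1 = s + 1 by omega] at hih
    have hins : Finset.Icc (s + 1 - 1) (n - 2) = insert s (Finset.Icc (s + 1) (n - 2)) := by
      ext x
      simp only [Finset.mem_insert, Finset.mem_Icc]
      omega
    have hnot : s ∉ Finset.Icc (s + 1) (n - 2) := by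
      simp only [Finset.mem_Icc]; omega
    rw [hkey, hih, hins, Finset.sum_insert hnot]
    omega

theorem stmt9 (n t : ℕ) (hn : 2 ≤ n) (ht1 : 1 ≤ t) (ht2 : t ≤ n - 1) :
    (Aset (n + 1) t).ncard = ∑ i ∈ Finset.Icc (t - 1) (n - 2), (Aset n i).ncard := by
  exact main_aux n hn (n - 1 - t) t ht1 (by omega)
end
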